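/- arXiv:1405.4988 — 8 statements merged into one kernel-verified Lean document; each statement's English description precedes it below -/
import Mathlib

section
/- Every infinite-dimensional Banach lattice contains a countably infinite family of nonzero pairwise disjoint positive vectors; that is, if E is an infinite-dimensional Banach lattice, then there exists a sequence (x_n)_{n∈ℕ} of vectors of E with x_n > 0 for all n and |x_n| ∧ |x_m| = 0 whenever n ≠ m. -/
open Filter Topology

section Aux

variable {E : Type*} [NormedAddCommGroup E] [Lattice E] [IsOrderedAddMonoid E] [HasSolidNorm E]

/-- An element `a` splits if there are two disjoint nonzero positive elements below it. -/
def SplitsBL (a : E) : Prop :=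
  ∃ b c : E, 0 < b ∧ b ≤ a ∧ 0 < c ∧ c ≤ a ∧ b ⊓ c = 0

lemma aux_inf_add_le {a b c : E} (_ha : 0 ≤ a) (hb : 0 ≤ b) (hc : 0 ≤ c) :
    a ⊓ (b + c) ≤ a ⊓ b + a ⊓ c := by
  set d := a ⊓ (b + c) with hd
  have h1 : d - a ⊓ b = (d - a) ⊔ (d - b) := sub_inf a b d
  have h2 : d - a ≤ a ⊓ c := by
    have hh : d - a ≤ 0 := sub_nonpos.2 inf_le_left
    exact hh.trans (le_inf _ha hc)
  have h3 : d - b ≤ a ⊓ c := by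
    refine le_inf ?_ ?_
    · calc d - b ≤ a - b := sub_le_sub_right inf_le_left b
      _ ≤ a := by simpa using hb
    · have hh : d ≤ b + c := inf_le_right
      rw [sub_le_iff_le_add, add_comm]
      exact hh
  have hfin : d - a ⊓ b ≤ a ⊓ c := by rw [h1]; exact sup_le h2 h3
  have := sub_le_iff_le_add.1 hfin
  rwa [add_comm] at this

lemma aux_disj_add {a b c : E} (ha : 0 ≤ a) (hb : 0 ≤ b) (hc : 0 ≤ c)
    (hab : a ⊓ b = 0) (hac : a ⊓ c = 0) : a ⊓ (b + c) = 0 := by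
  have h1 : a ⊓ (b + c) ≤ 0 := by
    have := aux_inf_add_le ha hb hc
    rwa [hab, hac, add_zero] at this
  have h2 : 0 ≤ a ⊓ (b + c) := le_inf ha (by positivity)
  exact le_antisymm h1 h2

lemma aux_disj_sum {a : E} (ha : 0 ≤ a) (l : List E) (hl : ∀ b ∈ l, 0 ≤ b)
    (hd : ∀ b ∈ l, a ⊓ b = 0) : a ⊓ l.sum = 0 := by
  induction l with
  | nil => simpa using inf_eq_right.2 ha
  | cons b t ih =>
      rw [List.sum_cons]
      exact aux_disj_add ha (hl b (by simp)) (List.sum_nonneg fun x hx => hl x (by simp [hx]))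
        (hd b (by simp)) (ih (fun x hx => hl x (by simp [hx])) (fun x hx => hd x (by simp [hx])))

lemma aux_sum_eq_sup {a b : E} (hab : a ⊓ b = 0) : a + b = a ⊔ b := by
  have := inf_add_sup a b
  rw [hab, zero_add] at this
  exact this.symm

/-- For a pairwise disjoint list of nonnegative elements, the sum of infima with `x ≥ 0`
is at most `x ⊓ sum`. -/
lemma aux_sum_inf_le {x : E} (hx : 0 ≤ x) (l : List E) (hl : ∀ a ∈ l, 0 ≤ a)
    (hd : l.Pairwise (fun a b => a ⊓ b = 0)) :
    (l.map (fun a => x ⊓ a)).sum ≤ x ⊓ l.sum := by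
  induction l with
  | nil => simp [hx]
  | cons a t ih =>
      rw [List.map_cons, List.sum_cons, List.sum_cons]
      rw [List.pairwise_cons] at hd
      have ha : 0 ≤ a := hl a (by simp)
      have ht : ∀ b ∈ t, 0 ≤ b := fun b hb => hl b (by simp [hb])
      have hts : 0 ≤ t.sum := List.sum_nonneg ht
      have key : (t.map (fun a => x ⊓ a)).sum ≤ x ⊓ t.sum := ih ht hd.2
      have hp : 0 ≤ x ⊓ a := le_inf hx ha
      have hq : 0 ≤ x ⊓ t.sum := le_inf hx hts
      have hdisj : (x ⊓ a) ⊓ (x ⊓ t.sum) = 0 := by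
        have h1 : (x ⊓ a) ⊓ (x ⊓ t.sum) ≤ a ⊓ t.sum :=
          inf_le_inf inf_le_right inf_le_right
        have h2 : a ⊓ t.sum = 0 := aux_disj_sum ha t ht hd.1
        exact le_antisymm (h1.trans_eq h2) (le_inf hp hq)
      calc (x ⊓ a) + (t.map (fun a => x ⊓ a)).sum
          ≤ (x ⊓ a) + (x ⊓ t.sum) := add_le_add_right key _
        _ = (x ⊓ a) ⊔ (x ⊓ t.sum) := aux_sum_eq_sup hdisj
        _ ≤ x ⊓ (a + t.sum) := by
            refine sup_le (le_inf inf_le_left ?_) (le_inf inf_le_left ?_)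
            · exact inf_le_right.trans (by simpa using hts)
            · exact inf_le_right.trans (by simpa using ha)

end Aux

section Smul

variable {E : Type*} [NormedAddCommGroup E] [Lattice E] [IsOrderedAddMonoid E] [HasSolidNorm E]
    [NormedSpace ℝ E] [PosSMulStrictMono ℝ E] [PosSMulReflectLT ℝ E]

lemma aux_smul_le_smul {s r : ℝ} (h : s ≤ r) {a : E} (ha : 0 ≤ a) : s • a ≤ r • a := by
  have := smul_nonneg (sub_nonneg.2 h) ha
  rw [sub_smul] at this
  exact sub_nonneg.1 this

lemma aux_scalar_le {a : E} (ha : 0 < a) {s r : ℝ} (h : s • a ≤ r • a) : s ≤ r := by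
  by_contra hn
  push_neg at hn
  have h1 : (0 : E) < (s - r) • a := smul_pos (sub_pos.2 hn) ha
  rw [sub_smul] at h1
  exact absurd h (sub_pos.1 h1).not_ge

lemma aux_disj_smul {a b : E} (ha : 0 ≤ a) (hb : 0 ≤ b) (hab : a ⊓ b = 0)
    {r s : ℝ} (hr : 0 ≤ r) (hs : 0 ≤ s) : (r • a) ⊓ (s • b) = 0 := by
  obtain ⟨N, hN⟩ := exists_nat_ge (max r s)
  have hra : r • a ≤ (N : ℝ) • a :=
    aux_smul_le_smul (le_trans (le_max_left r s) hN) ha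
  have hsb : s • b ≤ (N : ℝ) • b :=
    aux_smul_le_smul (le_trans (le_max_right r s) hN) hb
  have key : ∀ n : ℕ, a ⊓ ((n : ℝ) • b) = 0 := by
    intro n
    induction n with
    | zero => simpa using inf_eq_right.2 ha
    | succ k ih =>
        have : ((k : ℝ) + 1) • b = b + (k : ℝ) • b := by
          rw [add_smul, one_smul, add_comm]
        rw [Nat.cast_succ, this]
        exact aux_disj_add ha hb (smul_nonneg (by positivity) hb) hab ih
  have key2 : ((N : ℝ) • b) ⊓ ((N : ℝ) • a) = 0 := by
    have hNb : 0 ≤ (N : ℝ) • b := smul_nonneg (by positivity) hb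
    have : ∀ n : ℕ, ((N : ℝ) • b) ⊓ ((n : ℝ) • a) = 0 := by
      intro n
      induction n with
      | zero => simpa using inf_eq_right.2 hNb
      | succ k ih =>
          have h' : ((k : ℝ) + 1) • a = a + (k : ℝ) • a := by
            rw [add_smul, one_smul, add_comm]
          rw [Nat.cast_succ, h']
          have hba : ((N : ℝ) • b) ⊓ a = 0 := by
            rw [inf_comm]; exact key N
          exact aux_disj_add hNb ha (smul_nonneg (by positivity) ha) hba ih
    exact this N
  refine le_antisymm ?_ (le_inf (smul_nonneg hr ha) (smul_nonneg hs hb))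
  calc (r • a) ⊓ (s • b) ≤ ((N : ℝ) • a) ⊓ ((N : ℝ) • b) := inf_le_inf hra hsb
    _ = 0 := by rw [inf_comm]; exact key2

/-- Below an element with no disjoint pair, the order is linear. -/
lemma aux_linear {a : E} (hA : ¬ SplitsBL a) {u v : E} (hu0 : 0 ≤ u) (hua : u ≤ a)
    (hv0 : 0 ≤ v) (hva : v ≤ a) : u ≤ v ∨ v ≤ u := by
  by_contra hc
  push_neg at hc
  apply hA
  refine ⟨(u - v)⁺, (u - v)⁻, ?_, ?_, ?_, ?_, posPart_inf_negPart_eq_zero _⟩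
  · rcases eq_or_ne ((u - v)⁺) 0 with h | h
    · exact absurd (sub_nonpos.1 (posPart_eq_zero.1 h)) hc.1
    · exact (posPart_nonneg _).lt_of_ne' h
  · calc (u - v)⁺ = (u - v) ⊔ 0 := posPart_def _
      _ ≤ u ⊔ 0 := sup_le_sup_right (by simpa using hv0) 0
      _ = u := sup_eq_left.2 hu0
      _ ≤ a := hua
  · rcases eq_or_ne ((u - v)⁻) 0 with h | h
    · exact absurd (sub_nonneg.1 (negPart_eq_zero.1 h)) hc.2
    · exact (negPart_nonneg _).lt_of_ne' h
  · calc (u - v)⁻ = -(u - v) ⊔ 0 := negPart_def _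
      _ = (v - u) ⊔ 0 := by rw [neg_sub]
      _ ≤ v ⊔ 0 := sup_le_sup_right (by simpa using hu0) 0
      _ = v := sup_eq_left.2 hv0
      _ ≤ a := hva

/-- An atom's order interval is one-dimensional. -/
lemma aux_atom_interval {a : E} (ha : 0 < a) (hA : ¬ SplitsBL a) {y : E}
    (hy0 : 0 ≤ y) (hya : y ≤ a) : ∃ t : ℝ, 0 ≤ t ∧ y = t • a := by
  classical
  set S : Set ℝ := {t : ℝ | t ∈ Set.Icc (0 : ℝ) 1 ∧ t • a ≤ y} with hS
  have h0S : (0 : ℝ) ∈ S := by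
    constructor
    · exact ⟨le_refl 0, by norm_num⟩
    · simpa using hy0
  have hbdd : BddAbove S := ⟨1, fun t ht => ht.1.2⟩
  set c := sSup S with hc
  have hc0 : 0 ≤ c := le_csSup hbdd h0S
  have hc1 : c ≤ 1 := csSup_le ⟨0, h0S⟩ fun t ht => ht.1.2
  have hca : c • a ≤ y := by
    have hev : ∀ n : ℕ, (c - 1 / (n + 1)) • a ≤ y := by
      intro n
      obtain ⟨t, htS, htgt⟩ := exists_lt_of_lt_csSup ⟨0, h0S⟩
        (show c - 1 / (n + 1) < c by
          have : (0 : ℝ) < 1 / (n + 1) := by positivity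
          linarith)
      exact le_trans (aux_smul_le_smul htgt.le ha.le) htS.2
    have htend : Tendsto (fun n : ℕ => (c - 1 / (n + 1)) • a) atTop (𝓝 (c • a)) := by
      have h1 : Tendsto (fun n : ℕ => c - 1 / (n + 1 : ℝ)) atTop (𝓝 c) := by
        have := tendsto_one_div_add_atTop_nhds_zero_nat (𝕜 := ℝ)
        have := Tendsto.sub (tendsto_const_nhds (x := c)) this
        simpa using this
      exact h1.smul tendsto_const_nhds
    exact le_of_tendsto htend (Eventually.of_forall hev)
  have hyc : y ≤ c • a := by
    rcases eq_or_lt_of_le hc1 with h1 | h1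
    · -- c = 1 : also y ≤ a, but we need y ≤ a and a ≤ y? use approximation from S
      have hev : ∀ n : ℕ, y ≤ (c + 1 / (n + 1)) • a := by
        intro n
        have hle : y ≤ a := hya
        have : a ≤ (c + 1 / (n + 1)) • a := by
          have : (1 : ℝ) ≤ c + 1 / (n + 1) := by
            have : (0 : ℝ) < 1 / (n + 1) := by positivity
            linarith
          calc a = (1 : ℝ) • a := (one_smul ℝ a).symm
            _ ≤ (c + 1 / (n + 1)) • a := aux_smul_le_smul this ha.le
        exact hle.trans this
      have htend : Tendsto (fun n : ℕ => (c + 1 / (n + 1)) • a) atTop (𝓝 (c • a)) := by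
        have h2 : Tendsto (fun n : ℕ => c + 1 / (n + 1 : ℝ)) atTop (𝓝 c) := by
          have := tendsto_one_div_add_atTop_nhds_zero_nat (𝕜 := ℝ)
          have := Tendsto.add (tendsto_const_nhds (x := c)) this
          simpa using this
        exact h2.smul tendsto_const_nhds
      exact ge_of_tendsto htend (Eventually.of_forall hev)
    · -- c < 1
      have hev : ∀ᶠ n : ℕ in atTop, y ≤ (c + 1 / (n + 1)) • a := by
        have hev' : ∀ᶠ n : ℕ in atTop, c + 1 / (n + 1 : ℝ) ≤ 1 := by
          have h2 : Tendsto (fun n : ℕ => c + 1 / (n + 1 : ℝ)) atTop (𝓝 c) := by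
            have := tendsto_one_div_add_atTop_nhds_zero_nat (𝕜 := ℝ)
            have := Tendsto.add (tendsto_const_nhds (x := c)) this
            simpa using this
          exact h2.eventually_le_const h1
        filter_upwards [hev'] with n hn
        set t := c + 1 / (n + 1 : ℝ) with htdef
        have ht0 : 0 ≤ t := by positivity
        have htna : t • a ≤ a := by
          calc t • a ≤ (1 : ℝ) • a := aux_smul_le_smul hn ha.le
            _ = a := one_smul ℝ a
        have htnotS : t ∉ S := by
          intro htS
          have : t ≤ c := le_csSup hbdd htS
          have : (0 : ℝ) < 1 / (n + 1) := by positivity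
          simp only [htdef] at *
          linarith
        have : ¬ (t • a ≤ y) := fun hcon => htnotS ⟨⟨ht0, hn⟩, hcon⟩
        rcases aux_linear hA (smul_nonneg ht0 ha.le) htna hy0 hya with h | h
        · exact absurd h this
        · exact h
      have htend : Tendsto (fun n : ℕ => (c + 1 / (n + 1)) • a) atTop (𝓝 (c • a)) := by
        have h2 : Tendsto (fun n : ℕ => c + 1 / (n + 1 : ℝ)) atTop (𝓝 c) := by
          have := tendsto_one_div_add_atTop_nhds_zero_nat (𝕜 := ℝ)
          have := Tendsto.add (tendsto_const_nhds (x := c)) this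
          simpa using this
        exact h2.smul tendsto_const_nhds
      exact ge_of_tendsto htend hev
  exact ⟨c, hc0, le_antisymm hyc hca⟩

end Smul

section Main

variable {E : Type*} [NormedAddCommGroup E] [Lattice E] [IsOrderedAddMonoid E] [HasSolidNorm E]
    [NormedSpace ℝ E] [PosSMulStrictMono ℝ E] [PosSMulReflectLT ℝ E]

lemma aux_atom_proj {a : E} (ha : 0 < a) (hA : ¬ SplitsBL a) {x : E} (hx : 0 ≤ x) :
    ∃ c : ℝ, 0 ≤ c ∧ c • a ≤ x ∧ (x - c • a) ⊓ a = 0 ∧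
      Tendsto (fun n : ℕ => x ⊓ ((n : ℝ) • a)) atTop (𝓝 (c • a)) := by
  have hsc : ∀ n : ℕ, ∃ t : ℝ, 0 ≤ t ∧ x ⊓ ((n : ℝ) • a) = t • a := by
    intro n
    rcases Nat.eq_zero_or_pos n with h0 | hpos
    · refine ⟨0, le_refl _, ?_⟩
      rw [h0]
      simp [inf_eq_right.2 hx]
    · have hn0 : (0 : ℝ) < n := by exact_mod_cast hpos
      have hynn : 0 ≤ x ⊓ ((n : ℝ) • a) := le_inf hx (smul_nonneg (by positivity) ha.le)
      have h1 : 0 ≤ (n : ℝ)⁻¹ • (x ⊓ ((n : ℝ) • a)) := smul_nonneg (by positivity) hynn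
      have h2 : (n : ℝ)⁻¹ • (x ⊓ ((n : ℝ) • a)) ≤ a := by
        have := smul_le_smul_of_nonneg_left (inf_le_right : x ⊓ ((n : ℝ) • a) ≤ (n : ℝ) • a)
          (by positivity : (0:ℝ) ≤ (n : ℝ)⁻¹)
        rwa [smul_smul, inv_mul_cancel₀ hn0.ne', one_smul] at this
      obtain ⟨t, ht0, hteq⟩ := aux_atom_interval ha hA h1 h2
      refine ⟨(n : ℝ) * t, by positivity, ?_⟩
      have := congrArg (fun z => (n : ℝ) • z) hteq
      simp only [smul_smul, mul_inv_cancel₀ hn0.ne', one_smul] at this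
      exact this
  choose t ht0 hteq using hsc
  have hmono : Monotone t := by
    intro i j hij
    have h1 : t i • a ≤ t j • a := by
      rw [← hteq i, ← hteq j]
      exact inf_le_inf_left x (aux_smul_le_smul (by exact_mod_cast hij) ha.le)
    exact aux_scalar_le ha h1
  have hb : ∀ n, t n • a ≤ x := by
    intro n
    have : x ⊓ ((n : ℝ) • a) ≤ x := inf_le_left
    rwa [hteq n] at this
  have hanorm : (0:ℝ) < ‖a‖ := norm_pos_iff.2 ha.ne'
  have hbdd : BddAbove (Set.range t) := by
    refine ⟨‖x‖ / ‖a‖, ?_⟩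
    rintro _ ⟨n, rfl⟩
    have h4 : |t n • a| ≤ |x| := by
      rw [abs_of_nonneg (smul_nonneg (ht0 n) ha.le), abs_of_nonneg hx]
      exact hb n
    have h5 : ‖t n • a‖ ≤ ‖x‖ := norm_le_norm_of_abs_le_abs h4
    rw [norm_smul, Real.norm_eq_abs, abs_of_nonneg (ht0 n)] at h5
    rw [le_div_iff₀ hanorm]
    exact h5
  set c := ⨆ n, t n with hcdef
  have htc : Tendsto t atTop (𝓝 c) := tendsto_atTop_ciSup hmono hbdd
  have htlec : ∀ n, t n ≤ c := fun n => le_ciSup hbdd n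
  have hc0 : 0 ≤ c := le_trans (ht0 0) (htlec 0)
  have hsmul_tend : Tendsto (fun n => t n • a) atTop (𝓝 (c • a)) :=
    htc.smul tendsto_const_nhds
  have hinf_tend : Tendsto (fun n : ℕ => x ⊓ ((n : ℝ) • a)) atTop (𝓝 (c • a)) :=
    hsmul_tend.congr fun n => (hteq n).symm
  have hcx : c • a ≤ x := le_of_tendsto hsmul_tend (Eventually.of_forall hb)
  set z := (x - c • a) ⊓ a with hzdef
  have hz0 : 0 ≤ z := le_inf (sub_nonneg.2 hcx) ha.le
  have hzb : ∀ n : ℕ, z ≤ (t (n + 1) - t n) • a := by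
    intro n
    have h1 : z ≤ (x - t n • a) ⊓ a := by
      refine inf_le_inf_right a ?_
      exact sub_le_sub_left (aux_smul_le_smul (htlec n) ha.le) x
    have h2 : (x - t n • a) ⊓ a = x ⊓ (a + t n • a) - t n • a := by
      rw [inf_sub, add_sub_cancel_right]
    have htn_le : t n ≤ (n : ℝ) := by
      apply aux_scalar_le ha
      rw [← hteq n]
      exact inf_le_right
    have h3 : x ⊓ (a + t n • a) ≤ x ⊓ (((n : ℝ) + 1) • a) := by
      refine inf_le_inf_left x ?_
      have : a + t n • a = (t n + 1) • a := by rw [add_smul, one_smul, add_comm]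
      rw [this]
      exact aux_smul_le_smul (by linarith) ha.le
    have h4 : x ⊓ (((n : ℝ) + 1) • a) = t (n + 1) • a := by
      have := hteq (n + 1)
      push_cast at this
      exact this
    calc z ≤ (x - t n • a) ⊓ a := h1
      _ = x ⊓ (a + t n • a) - t n • a := h2
      _ ≤ x ⊓ (((n : ℝ) + 1) • a) - t n • a := sub_le_sub_right h3 _
      _ = t (n + 1) • a - t n • a := by rw [h4]
      _ = (t (n + 1) - t n) • a := (sub_smul _ _ _).symm
  have hzn : ∀ n, ‖z‖ ≤ (t (n + 1) - t n) * ‖a‖ := by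
    intro n
    have h4 : |z| ≤ |(t (n + 1) - t n) • a| := by
      rw [abs_of_nonneg hz0, abs_of_nonneg (hz0.trans (hzb n))]
      exact hzb n
    calc ‖z‖ ≤ ‖(t (n + 1) - t n) • a‖ := norm_le_norm_of_abs_le_abs h4
      _ = (t (n + 1) - t n) * ‖a‖ := by
          rw [norm_smul, Real.norm_eq_abs, abs_of_nonneg (sub_nonneg.2 (hmono (Nat.le_succ n)))]
  have hdiff : Tendsto (fun n => (t (n + 1) - t n) * ‖a‖) atTop (𝓝 0) := by
    have h5 : Tendsto (fun n => t (n + 1)) atTop (𝓝 c) :=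
      htc.comp (tendsto_add_atTop_nat 1)
    have h6 := (h5.sub htc).mul_const ‖a‖
    simpa using h6
  have hznorm : ‖z‖ ≤ 0 := ge_of_tendsto hdiff (Eventually.of_forall hzn)
  have hz : z = 0 := norm_le_zero_iff.1 hznorm
  exact ⟨c, hc0, hcx, hz, hinf_tend⟩

lemma aux_tendsto_list_sum {ι : Type*} (l : List ι) (f : ι → ℕ → E) (g : ι → E)
    (h : ∀ i ∈ l, Tendsto (f i) atTop (𝓝 (g i))) :
    Tendsto (fun n => (l.map (fun i => f i n)).sum) atTop (𝓝 ((l.map g).sum)) := by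
  induction l with
  | nil => simpa using tendsto_const_nhds
  | cons i s ih =>
      simp only [List.map_cons, List.sum_cons]
      exact (h i (by simp)).add (ih fun j hj => h j (by simp [hj]))

lemma aux_exists_atom (H : ∀ x : ℕ → E, (∀ n, 0 < x n) → ¬ (∀ n m, n ≠ m → x n ⊓ x m = 0))
    {e : E} (he : 0 < e) : ∃ a : E, 0 < a ∧ a ≤ e ∧ ¬ SplitsBL a := by
  by_contra hno
  push_neg at hno
  have hno' : ∀ a : E, 0 < a → a ≤ e → SplitsBL a := by
    intro a h1 h2
    by_contra hS
    exact hS (hno a h1 h2)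
  set T := {p : E × E // (0 < p.1 ∧ p.1 ≤ e) ∧ (0 < p.2 ∧ p.2 ≤ e) ∧ p.1 ⊓ p.2 = 0} with hT
  have hstep : ∀ p : T, ∃ q : T, q.1.1 ≤ p.1.2 ∧ q.1.2 ≤ p.1.2 := by
    rintro ⟨⟨u, v⟩, ⟨hu, hue⟩, ⟨hv, hve⟩, huv⟩
    obtain ⟨b, c, hb, hbv, hc, hcv, hbc⟩ := hno' v hv hve
    exact ⟨⟨(b, c), ⟨hb, hbv.trans hve⟩, ⟨hc, hcv.trans hve⟩, hbc⟩, hbv, hcv⟩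
  choose step h1 h2 using hstep
  obtain ⟨b0, c0, hb0, hb0e, hc0, hc0e, h0⟩ := hno' e he le_rfl
  set p0 : T := ⟨(b0, c0), ⟨hb0, hb0e⟩, ⟨hc0, hc0e⟩, h0⟩ with hp0
  set q : ℕ → T := fun n => step^[n] p0 with hqdef
  have hqs : ∀ n, q (n + 1) = step (q n) := fun n => Function.iterate_succ_apply' step n p0
  have hchain : ∀ n k, (q (n + 1 + k)).1.1 ≤ (q n).1.2 ∧ (q (n + 1 + k)).1.2 ≤ (q n).1.2 := by
    intro n k
    induction k with
    | zero =>
        rw [Nat.add_zero, hqs n]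
        exact ⟨h1 (q n), h2 (q n)⟩
    | succ k ih =>
        have heq : n + 1 + (k + 1) = (n + 1 + k) + 1 := rfl
        rw [heq, hqs]
        exact ⟨(h1 _).trans ih.2, (h2 _).trans ih.2⟩
  have key : ∀ n m, n < m → (q n).1.1 ⊓ (q m).1.1 = 0 := by
    intro n m hlt
    have hm : (q m).1.1 ≤ (q n).1.2 := by
      have := (hchain n (m - n - 1)).1
      rwa [show n + 1 + (m - n - 1) = m by omega] at this
    refine le_antisymm ?_ (le_inf (q n).2.1.1.le (q m).2.1.1.le)
    calc (q n).1.1 ⊓ (q m).1.1 ≤ (q n).1.1 ⊓ (q n).1.2 := inf_le_inf_left _ hm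
      _ = 0 := (q n).2.2.2
  refine H (fun n => (q n).1.1) (fun n => (q n).2.1.1) ?_
  intro n m hnm
  rcases lt_or_gt_of_ne hnm with hl | hl
  · exact key n m hl
  · rw [inf_comm]; exact key m n hl

lemma aux_exists_maximal (H : ∀ x : ℕ → E, (∀ n, 0 < x n) → ¬ (∀ n m, n ≠ m → x n ⊓ x m = 0)) :
    ∃ L : List E, (∀ a ∈ L, 0 < a ∧ ¬ SplitsBL a) ∧ L.Pairwise (fun a b => a ⊓ b = 0) ∧
      ∀ z : E, 0 < z → ∃ a ∈ L, z ⊓ a ≠ 0 := by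
  by_contra hno
  push_neg at hno
  set T := {l : List E // (∀ a ∈ l, 0 < a ∧ ¬ SplitsBL a) ∧ l.Pairwise (fun a b => a ⊓ b = 0)}
    with hT
  have hstep : ∀ l : T, ∃ v : E, (0 < v ∧ ¬ SplitsBL v) ∧ ∀ b ∈ l.1, v ⊓ b = 0 := by
    rintro ⟨l, hl, hp⟩
    obtain ⟨z, hz, hzd⟩ := hno l hl hp
    obtain ⟨a, haz, hale, hA⟩ := aux_exists_atom H hz
    refine ⟨a, ⟨haz, hA⟩, fun b hb => ?_⟩
    refine le_antisymm ?_ (le_inf haz.le (hl b hb).1.le)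
    calc a ⊓ b ≤ z ⊓ b := inf_le_inf_right b hale
      _ = 0 := hzd b hb
  choose w hw1 hw2 using hstep
  set step : T → T := fun l => ⟨w l :: l.1, by
    constructor
    · intro a hax
      rcases List.mem_cons.1 hax with hcase | hcase
      · rw [hcase]; exact hw1 l
      · exact l.2.1 a hcase
    · rw [List.pairwise_cons]
      exact ⟨hw2 l, l.2.2⟩⟩ with hstepdef
  set g : ℕ → T := fun n => step^[n] ⟨[], by simp⟩ with hgdef
  have hgs : ∀ n, g (n + 1) = step (g n) := fun n => Function.iterate_succ_apply' _ _ _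
  have hmem : ∀ n m, n < m → w (g n) ∈ (g m).1 := by
    intro n m
    induction m with
    | zero => omega
    | succ m ih =>
        intro hlt
        rw [hgs m]
        show w (g n) ∈ w (g m) :: (g m).1
        rcases Nat.lt_succ_iff_lt_or_eq.1 hlt with hcase | hcase
        · exact List.mem_cons_of_mem _ (ih hcase)
        · rw [hcase]; exact List.mem_cons_self
  have key : ∀ i j, i < j → w (g i) ⊓ w (g j) = 0 := by
    intro i j hij
    rw [inf_comm]
    exact hw2 (g j) (w (g i)) (hmem i j hij)
  refine H (fun n => w (g n)) (fun n => (hw1 (g n)).1) ?_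
  intro n m hnm
  rcases lt_or_gt_of_ne hnm with hl | hl
  · exact key n m hl
  · rw [inf_comm]; exact key m n hl

end Main

/-- Every infinite-dimensional Banach lattice contains a countably infinite family of
nonzero pairwise disjoint positive vectors. -/
theorem infinite_dim_banach_lattice_exists_disjoint_sequence
    {E : Type*} [NormedAddCommGroup E] [Lattice E] [IsOrderedAddMonoid E] [HasSolidNorm E]
    [NormedSpace ℝ E] [PosSMulStrictMono ℝ E] [PosSMulReflectLT ℝ E]
    [CompleteSpace E] (h : ¬ FiniteDimensional ℝ E) :
    ∃ x : ℕ → E, (∀ n, 0 < x n) ∧ ∀ n m, n ≠ m → |x n| ⊓ |x m| = 0 := by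
  classical
  by_contra h0
  push_neg at h0
  have H : ∀ x : ℕ → E, (∀ n, 0 < x n) → ¬ (∀ n m, n ≠ m → x n ⊓ x m = 0) := by
    intro x hx hd
    obtain ⟨n, m, hnm, hne⟩ := h0 x hx
    exact hne (by rw [abs_of_pos (hx n), abs_of_pos (hx m)]; exact hd n m hnm)
  apply h
  obtain ⟨L, hL, hLp, hLmax⟩ := aux_exists_maximal H
  have hspan : ∀ x : E, 0 ≤ x → x ∈ Submodule.span ℝ {a : E | a ∈ L} := by
    intro x hx
    have hcex : ∀ a : E, ∃ cc : ℝ, a ∈ L → (0 ≤ cc ∧ cc • a ≤ x ∧ (x - cc • a) ⊓ a = 0 ∧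
        Tendsto (fun n : ℕ => x ⊓ ((n : ℝ) • a)) atTop (𝓝 (cc • a))) := by
      intro a
      by_cases haL : a ∈ L
      · obtain ⟨c, h1, h2, h3, h4⟩ := aux_atom_proj (hL a haL).1 (hL a haL).2 hx
        exact ⟨c, fun _ => ⟨h1, h2, h3, h4⟩⟩
      · exact ⟨0, fun hmem => absurd hmem haL⟩
    choose c hc using hcex
    set y := x - (L.map (fun a => c a • a)).sum with hy
    have hsum_le : ∀ n : ℕ, (L.map (fun a => x ⊓ ((n : ℝ) • a))).sum ≤ x := by
      intro n
      have h1 : (L.map (fun a => (n : ℝ) • a)).Pairwise (fun a b => a ⊓ b = 0) := by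
        rw [List.pairwise_map]
        refine hLp.imp_of_mem ?_
        intro a b ha hb hab
        exact aux_disj_smul (hL a ha).1.le (hL b hb).1.le hab (by positivity) (by positivity)
      have h2 : ∀ b ∈ L.map (fun a => (n : ℝ) • a), 0 ≤ b := by
        intro b hb
        obtain ⟨a, haL, rfl⟩ := List.mem_map.1 hb
        exact smul_nonneg (by positivity) (hL a haL).1.le
      have h3 := aux_sum_inf_le hx _ h2 h1
      rw [List.map_map] at h3
      exact le_trans h3 inf_le_left
    have hy0 : 0 ≤ y := by
      rw [hy, sub_nonneg]
      have htend : Tendsto (fun n : ℕ => (L.map (fun a => x ⊓ ((n : ℝ) • a))).sum) atTop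
          (𝓝 ((L.map (fun a => c a • a)).sum)) := by
        apply aux_tendsto_list_sum L (fun a n => x ⊓ ((n : ℝ) • a)) (fun a => c a • a)
        intro a haL
        exact (hc a haL).2.2.2
      exact le_of_tendsto htend (Eventually.of_forall hsum_le)
    have hyd : ∀ a ∈ L, y ⊓ a = 0 := by
      intro a haL
      have h1 : y ≤ x - c a • a := by
        rw [hy]
        apply sub_le_sub_left
        refine List.single_le_sum ?_ _ (List.mem_map.2 ⟨a, haL, rfl⟩)
        intro b hb
        obtain ⟨a', ha', rfl⟩ := List.mem_map.1 hb
        exact smul_nonneg (hc a' ha').1 (hL a' ha').1.le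
      refine le_antisymm ?_ (le_inf hy0 (hL a haL).1.le)
      calc y ⊓ a ≤ (x - c a • a) ⊓ a := inf_le_inf_right a h1
        _ = 0 := (hc a haL).2.2.1
    have hy_eq : y = 0 := by
      by_contra hyne
      obtain ⟨a, haL, hna⟩ := hLmax y (hy0.lt_of_ne' hyne)
      exact hna (hyd a haL)
    have hxeq : x = (L.map (fun a => c a • a)).sum := by
      have := hy_eq
      rw [hy, sub_eq_zero] at this
      exact this
    rw [hxeq]
    refine list_sum_mem ?_
    intro b hb
    obtain ⟨a, haL, rfl⟩ := List.mem_map.1 hb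
    exact Submodule.smul_mem _ _ (Submodule.subset_span haL)
  have hspan_top : Submodule.span ℝ {a : E | a ∈ L} = ⊤ := by
    rw [eq_top_iff]
    intro x _
    have hx : x = x⁺ - x⁻ := (posPart_sub_negPart x).symm
    rw [hx]
    exact Submodule.sub_mem _ (hspan _ (posPart_nonneg x)) (hspan _ (negPart_nonneg x))
  exact ⟨⟨L.toFinset, by rw [List.coe_toFinset]; exact hspan_top⟩⟩
end

section
/- Let E be a Banach lattice of dimension at least 3, let x_1, x_2, x_3 be nonzero positive pairwise disjoint vectors of E, and let φ_1, φ_2, φ_3 be positive continuous linear functionals on E with φ_i(x_j) = δ_{ij}. Define the bounded finite-rank operators A = (−x_2 + x_3) ⊗ φ_1 + (x_1 + x_2) ⊗ φ_2 and B = x_2 ⊗ (φ_2 + φ_3). Then AB = (x_1 + x_2) ⊗ (φ_2 + φ_3), BA = x_2 ⊗ φ_2, AB ≥ BA ≥ 0, B is positive, and the operator A(AB − BA) has eigenvalue 1 with eigenvector x_1 + x_3 (in particular AB − BA is not quasinilpotent after multiplication by A, so AB − BA is not in the radical of the Banach algebra generated by A and B). -/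
/-- Counterexample: for `A = (−x₂+x₃) ⊗ φ₁ + (x₁+x₂) ⊗ φ₂` and `B = x₂ ⊗ (φ₂+φ₃)` one has
`AB = (x₁+x₂) ⊗ (φ₂+φ₃)`, `BA = x₂ ⊗ φ₂`, `AB ≥ BA ≥ 0`, `B ≥ 0`, and `A(AB−BA)` has
eigenvalue `1` with eigenvector `x₁ + x₃`.  (Here `x ⊗ φ` is `φ.smulRight x`.) -/
theorem counterexample_one
    {E : Type*} [NormedAddCommGroup E] [Lattice E] [HasSolidNorm E]
    [IsOrderedAddMonoid E] [NormedSpace ℝ E] [PosSMulStrictMono ℝ E]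
    [CompleteSpace E] (hdim : (3 : Cardinal) ≤ Module.rank ℝ E)
    (x₁ x₂ x₃ : E) (hx₁ : 0 < x₁) (hx₂ : 0 < x₂) (hx₃ : 0 < x₃)
    (hd12 : |x₁| ⊓ |x₂| = 0) (hd13 : |x₁| ⊓ |x₃| = 0) (hd23 : |x₂| ⊓ |x₃| = 0)
    (φ₁ φ₂ φ₃ : E →L[ℝ] ℝ)
    (hφ₁ : ∀ v : E, 0 ≤ v → 0 ≤ φ₁ v) (hφ₂ : ∀ v : E, 0 ≤ v → 0 ≤ φ₂ v)
    (hφ₃ : ∀ v : E, 0 ≤ v → 0 ≤ φ₃ v)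
    (h11 : φ₁ x₁ = 1) (h12 : φ₁ x₂ = 0) (h13 : φ₁ x₃ = 0)
    (h21 : φ₂ x₁ = 0) (h22 : φ₂ x₂ = 1) (h23 : φ₂ x₃ = 0)
    (h31 : φ₃ x₁ = 0) (h32 : φ₃ x₂ = 0) (h33 : φ₃ x₃ = 1)
    (A B : E →L[ℝ] E)
    (hA : A = φ₁.smulRight (-x₂ + x₃) + φ₂.smulRight (x₁ + x₂))
    (hB : B = (φ₂ + φ₃).smulRight x₂) :
    A * B = (φ₂ + φ₃).smulRight (x₁ + x₂) ∧
    B * A = φ₂.smulRight x₂ ∧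
    (∀ v : E, 0 ≤ v → (B * A) v ≤ (A * B) v) ∧
    (∀ v : E, 0 ≤ v → 0 ≤ (B * A) v) ∧
    (∀ v : E, 0 ≤ v → 0 ≤ B v) ∧
    (A * (A * B - B * A)) (x₁ + x₃) = x₁ + x₃ ∧
    x₁ + x₃ ≠ 0 := by
  subst hA hB
  have hAB : (φ₁.smulRight (-x₂ + x₃) + φ₂.smulRight (x₁ + x₂)) * ((φ₂ + φ₃).smulRight x₂)
      = (φ₂ + φ₃).smulRight (x₁ + x₂) := by
    ext v
    simp [ContinuousLinearMap.mul_apply, ContinuousLinearMap.smulRight_apply, h12, h22, h32,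
      smul_add, smul_smul]
  have hBA : ((φ₂ + φ₃).smulRight x₂) * (φ₁.smulRight (-x₂ + x₃) + φ₂.smulRight (x₁ + x₂))
      = φ₂.smulRight x₂ := by
    ext v
    simp [ContinuousLinearMap.mul_apply, ContinuousLinearMap.smulRight_apply, h12, h13, h21,
      h22, h23, h31, h32, h33, smul_add]
  refine ⟨hAB, hBA, ?_, ?_, ?_, ?_, ?_⟩
  · intro v hv
    rw [hAB, hBA]
    have h1 : (0:E) ≤ φ₂ v • x₁ := smul_nonneg (hφ₂ v hv) hx₁.le
    have h2 : (0:E) ≤ φ₃ v • x₁ := smul_nonneg (hφ₃ v hv) hx₁.le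
    have h3 : (0:E) ≤ φ₃ v • x₂ := smul_nonneg (hφ₃ v hv) hx₂.le
    have key : ((φ₂ + φ₃).smulRight (x₁ + x₂)) v
        = (φ₂.smulRight x₂) v + (φ₂ v • x₁ + (φ₃ v • x₁ + φ₃ v • x₂)) := by
      simp only [ContinuousLinearMap.smulRight_apply, ContinuousLinearMap.add_apply]
      module
    rw [key]
    exact le_add_of_nonneg_right (add_nonneg h1 (add_nonneg h2 h3))
  · intro v hv
    rw [hBA]
    exact smul_nonneg (hφ₂ v hv) hx₂.le
  · intro v hv
    exact smul_nonneg (add_nonneg (hφ₂ v hv) (hφ₃ v hv)) hx₂.le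
  · rw [hAB, hBA]
    simp only [ContinuousLinearMap.mul_apply, ContinuousLinearMap.sub_apply,
      ContinuousLinearMap.smulRight_apply, ContinuousLinearMap.add_apply, map_add, map_smul,
      map_sub, h11, h12, h13, h21, h22, h23, h31, h32, h33]
    module
  · have : (0:E) < x₁ + x₃ := by positivity
    exact this.ne'
end

section
/- Let E be a Banach lattice of dimension at least 3, let x_1, x_2, x_3 be nonzero positive pairwise disjoint vectors of E, and let φ_1, φ_2, φ_3 be positive continuous linear functionals on E with φ_i(x_j) = δ_{ij}. Define the bounded finite-rank operators A = (x_2 + x_3) ⊗ φ_2 and B = x_2 ⊗ φ_1 + (x_2 − x_1) ⊗ φ_2 + x_1 ⊗ φ_3. Then A is positive, AB ≥ BA ≥ 0, and (AB − BA)B(x_2 + 2x_3) = x_2 + 2x_3, so 1 is in the spectrum of the operator (AB − BA)B (in particular AB − BA is not in the radical of the Banach algebra generated by A and B). -/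
/-- Counterexample: for `A = (x₂+x₃) ⊗ φ₂` and `B = x₂ ⊗ φ₁ + (x₂−x₁) ⊗ φ₂ + x₁ ⊗ φ₃`
one has `A ≥ 0`, `AB ≥ BA ≥ 0`, `(AB−BA)B(x₂+2x₃) = x₂+2x₃`, and hence `1` lies in the
spectrum of `(AB−BA)B`.  (Here `x ⊗ φ` is `φ.smulRight x`.) -/
theorem counterexample_two
    {E : Type*} [NormedAddCommGroup E] [Lattice E] [HasSolidNorm E] [IsOrderedAddMonoid E]
    [NormedSpace ℝ E] [PosSMulStrictMono ℝ E] [PosSMulReflectLT ℝ E]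
    [CompleteSpace E] (hdim : (3 : Cardinal) ≤ Module.rank ℝ E)
    (x₁ x₂ x₃ : E) (hx₁ : 0 < x₁) (hx₂ : 0 < x₂) (hx₃ : 0 < x₃)
    (hd12 : |x₁| ⊓ |x₂| = 0) (hd13 : |x₁| ⊓ |x₃| = 0) (hd23 : |x₂| ⊓ |x₃| = 0)
    (φ₁ φ₂ φ₃ : E →L[ℝ] ℝ)
    (hφ₁ : ∀ v : E, 0 ≤ v → 0 ≤ φ₁ v) (hφ₂ : ∀ v : E, 0 ≤ v → 0 ≤ φ₂ v)
    (hφ₃ : ∀ v : E, 0 ≤ v → 0 ≤ φ₃ v)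
    (h11 : φ₁ x₁ = 1) (h12 : φ₁ x₂ = 0) (h13 : φ₁ x₃ = 0)
    (h21 : φ₂ x₁ = 0) (h22 : φ₂ x₂ = 1) (h23 : φ₂ x₃ = 0)
    (h31 : φ₃ x₁ = 0) (h32 : φ₃ x₂ = 0) (h33 : φ₃ x₃ = 1)
    (A B : E →L[ℝ] E)
    (hA : A = φ₂.smulRight (x₂ + x₃))
    (hB : B = φ₁.smulRight x₂ + φ₂.smulRight (x₂ - x₁) + φ₃.smulRight x₁) :
    (∀ v : E, 0 ≤ v → 0 ≤ A v) ∧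
    (∀ v : E, 0 ≤ v → (B * A) v ≤ (A * B) v) ∧
    (∀ v : E, 0 ≤ v → 0 ≤ (B * A) v) ∧
    ((A * B - B * A) * B) (x₂ + (2 : ℝ) • x₃) = x₂ + (2 : ℝ) • x₃ ∧
    (1 : ℝ) ∈ spectrum ℝ ((A * B - B * A) * B) := by
  have hAap : ∀ v : E, A v = φ₂ v • (x₂ + x₃) := by
    intro v; simp [hA]
  have hBap : ∀ v : E, B v = φ₁ v • x₂ + φ₂ v • (x₂ - x₁) + φ₃ v • x₁ := by
    intro v; simp [hB]
  have hAB : ∀ v : E, (A * B) v = (φ₁ v + φ₂ v) • (x₂ + x₃) := by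
    intro v
    have : (A * B) v = A (B v) := rfl
    rw [this, hBap, hAap]
    simp [map_add, map_smul, map_sub, h21, h22, smul_smul]
  have hBA : ∀ v : E, (B * A) v = φ₂ v • x₂ := by
    intro v
    have : (B * A) v = B (A v) := rfl
    rw [this, hAap, hBap]
    simp [map_add, map_smul, h12, h13, h22, h23, h32, h33, smul_smul]
    module
  have hC : ∀ v : E, (A * B - B * A) v = φ₁ v • (x₂ + x₃) + φ₂ v • x₃ := by
    intro v
    have : (A * B - B * A) v = (A * B) v - (B * A) v := rfl
    rw [this, hAB, hBA]
    module
  have hpos23 : (0 : E) ≤ x₂ + x₃ := add_nonneg hx₂.le hx₃.le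
  refine ⟨?_, ?_, ?_, ?_, ?_⟩
  · intro v hv
    rw [hAap]
    exact smul_nonneg (hφ₂ v hv) hpos23
  · intro v hv
    rw [hAB, hBA, ← sub_nonneg]
    have : (φ₁ v + φ₂ v) • (x₂ + x₃) - φ₂ v • x₂ = φ₁ v • (x₂ + x₃) + φ₂ v • x₃ := by
      module
    rw [this]
    exact add_nonneg (smul_nonneg (hφ₁ v hv) hpos23) (smul_nonneg (hφ₂ v hv) hx₃.le)
  · intro v hv
    rw [hBA]
    exact smul_nonneg (hφ₂ v hv) hx₂.le
  · have : ((A * B - B * A) * B) (x₂ + (2 : ℝ) • x₃) =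
        (A * B - B * A) (B (x₂ + (2 : ℝ) • x₃)) := rfl
    rw [this, hBap, hC]
    simp [map_add, map_smul, h12, h13, h22, h23, h32, h33, h11, h21, h31, map_sub]
    module
  · have heig : ((A * B - B * A) * B) (x₂ + (2 : ℝ) • x₃) = x₂ + (2 : ℝ) • x₃ := by
      have : ((A * B - B * A) * B) (x₂ + (2 : ℝ) • x₃) =
          (A * B - B * A) (B (x₂ + (2 : ℝ) • x₃)) := rfl
      rw [this, hBap, hC]
      simp [map_add, map_smul, h12, h13, h22, h23, h32, h33, h11, h21, h31, map_sub]
      module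
    have hwne : x₂ + (2 : ℝ) • x₃ ≠ 0 := by
      have h2 : (0 : E) < x₂ + (2 : ℝ) • x₃ :=
        lt_of_lt_of_le hx₂ (le_add_of_nonneg_right (smul_nonneg (by norm_num) hx₃.le))
      exact h2.ne'
    rw [spectrum.mem_iff]
    intro hu
    obtain ⟨u, hu⟩ := hu
    have hker : (algebraMap ℝ (E →L[ℝ] E) 1 - (A * B - B * A) * B) (x₂ + (2 : ℝ) • x₃) = 0 := by
      simp [ContinuousLinearMap.sub_apply, heig]
    have : (x₂ + (2 : ℝ) • x₃) = 0 := by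
      have := congrArg (fun T : E →L[ℝ] E => T (x₂ + (2 : ℝ) • x₃))
        u.inv_mul
      rw [hu] at this
      calc x₂ + (2 : ℝ) • x₃ = (↑u⁻¹ * (algebraMap ℝ (E →L[ℝ] E) 1 - (A * B - B * A) * B))
            (x₂ + (2 : ℝ) • x₃) := by rw [← hu] at this ⊢; exact this.symm
        _ = (↑u⁻¹ : E →L[ℝ] E) ((algebraMap ℝ (E →L[ℝ] E) 1 - (A * B - B * A) * B)
            (x₂ + (2 : ℝ) • x₃)) := rfl
        _ = 0 := by rw [hker]; simp
    exact hwne this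
end

section
/- Suppose that matrices A and B in M_2(ℝ) satisfy AB ≥ BA ≥ 0 (entrywise). Then either AB = BA, or A and B are simultaneously completely decomposable, i.e., there exists a 2×2 permutation matrix P such that both P⁻¹AP and P⁻¹BP are upper triangular. -/
private lemma conj_perm_triangular (σ : Equiv.Perm (Fin 2)) (A : Matrix (Fin 2) (Fin 2) ℝ)
    (h : A (σ⁻¹ 1) (σ⁻¹ 0) = 0) :
    ((σ.toPEquiv.toMatrix : Matrix (Fin 2) (Fin 2) ℝ)⁻¹ * A * σ.toPEquiv.toMatrix).BlockTriangular id := by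
  have hinv : (σ.toPEquiv.toMatrix : Matrix (Fin 2) (Fin 2) ℝ)⁻¹ = (σ⁻¹).toPEquiv.toMatrix := by
    apply Matrix.inv_eq_left_inv
    rw [← PEquiv.toMatrix_trans, ← Equiv.toPEquiv_trans]
    rw [show σ⁻¹.trans σ = Equiv.refl (Fin 2) by ext z; simp, Equiv.toPEquiv_refl,
      PEquiv.toMatrix_refl]
  intro i j hij
  rw [hinv, PEquiv.toMatrix_toPEquiv_mul, PEquiv.mul_toMatrix_toPEquiv]
  fin_cases i <;> fin_cases j <;>
    simp only [id_eq, Fin.mk_zero, Fin.mk_one, Matrix.submatrix_apply] at hij ⊢ <;>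
    first | omega | exact h

/-- If `A, B ∈ M₂(ℝ)` satisfy `AB ≥ BA ≥ 0` entrywise, then either `AB = BA` or `A` and `B`
are simultaneously completely decomposable: some permutation matrix `P` conjugates both to
upper triangular form. -/
theorem two_by_two_semicommuting_decomposable
    (A B : Matrix (Fin 2) (Fin 2) ℝ)
    (hBA : ∀ i j, 0 ≤ (B * A) i j)
    (hAB : ∀ i j, (B * A) i j ≤ (A * B) i j) :
    A * B = B * A ∨
    ∃ P : Matrix (Fin 2) (Fin 2) ℝ,
      (∃ σ : Equiv.Perm (Fin 2), P = σ.toPEquiv.toMatrix) ∧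
      (P⁻¹ * A * P).BlockTriangular id ∧ (P⁻¹ * B * P).BlockTriangular id := by
  simp only [Matrix.mul_apply, Fin.sum_univ_two] at hBA hAB
  have hbr : A 0 1 * B 1 0 = B 0 1 * A 1 0 := by
    have h1 := hAB 0 0
    have h2 := hAB 1 1
    linarith
  set x : ℝ := (A 0 0 * B 0 1 + A 0 1 * B 1 1) - (B 0 0 * A 0 1 + B 0 1 * A 1 1) with hxdef
  set y : ℝ := (A 1 0 * B 0 0 + A 1 1 * B 1 0) - (B 1 0 * A 0 0 + B 1 1 * A 1 0) with hydef
  have hx : 0 ≤ x := by have := hAB 0 1; linarith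
  have hy : 0 ≤ y := by have := hAB 1 0; linarith
  have hcx : A 1 0 * x + A 0 1 * y = 0 := by
    rw [hxdef, hydef]; linear_combination (A 1 1 - A 0 0) * hbr
  have hrx : B 1 0 * x + B 0 1 * y = 0 := by
    rw [hxdef, hydef]; linear_combination (B 1 1 - B 0 0) * hbr
  rcases hx.lt_or_eq with hx' | hx'
  · rcases hy.lt_or_eq with hy' | hy'
    · -- x > 0 and y > 0 : contradiction
      exfalso
      have h1 : 0 ≤ A 0 0 * B 0 1 + A 0 1 * B 1 1 := le_trans (hBA 0 1) (hAB 0 1)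
      have h2 : 0 ≤ B 1 0 * A 0 0 + B 1 1 * A 1 0 := hBA 1 0
      have h3 : 0 ≤ B 0 0 * A 0 1 + B 0 1 * A 1 1 := hBA 0 1
      have h4 : 0 ≤ A 1 0 * B 0 0 + A 1 1 * B 1 0 := le_trans (hBA 1 0) (hAB 1 0)
      have key1 : x * (B 1 0 * A 0 0 + B 1 1 * A 1 0)
          + y * (A 0 0 * B 0 1 + A 0 1 * B 1 1) = 0 := by
        linear_combination A 0 0 * hrx + B 1 1 * hcx
      have key2 : x * (A 1 0 * B 0 0 + A 1 1 * B 1 0)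
          + y * (B 0 0 * A 0 1 + B 0 1 * A 1 1) = 0 := by
        linear_combination B 0 0 * hcx + A 1 1 * hrx
      have e1 : A 0 0 * B 0 1 + A 0 1 * B 1 1 = 0 := by
        nlinarith [mul_nonneg hx'.le h2, mul_nonneg hy'.le h1]
      have e2 : B 0 0 * A 0 1 + B 0 1 * A 1 1 = 0 := by
        nlinarith [mul_nonneg hx'.le h4, mul_nonneg hy'.le h3]
      linarith [hxdef, e1, e2, hx']
    · -- x > 0, y = 0 : A 1 0 = 0 and B 1 0 = 0, use identity permutation
      right
      have hc : A 1 0 = 0 := by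
        have h0 : A 1 0 * x = 0 := by rw [← hy'] at hcx; linarith
        rcases mul_eq_zero.1 h0 with h | h
        · exact h
        · exact absurd h.symm (ne_of_lt hx')
      have hr : B 1 0 = 0 := by
        have h0 : B 1 0 * x = 0 := by rw [← hy'] at hrx; linarith
        rcases mul_eq_zero.1 h0 with h | h
        · exact h
        · exact absurd h.symm (ne_of_lt hx')
      refine ⟨(1 : Equiv.Perm (Fin 2)).toPEquiv.toMatrix, ⟨1, rfl⟩, ?_, ?_⟩
      · exact conj_perm_triangular 1 A (show A 1 0 = 0 from hc)
      · exact conj_perm_triangular 1 B (show B 1 0 = 0 from hr)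
  · rcases hy.lt_or_eq with hy' | hy'
    · -- y > 0, x = 0 : A 0 1 = 0 and B 0 1 = 0, use swap permutation
      right
      have hb : A 0 1 = 0 := by
        have h0 : A 0 1 * y = 0 := by rw [← hx'] at hcx; linarith
        rcases mul_eq_zero.1 h0 with h | h
        · exact h
        · exact absurd h.symm (ne_of_lt hy')
      have hq : B 0 1 = 0 := by
        have h0 : B 0 1 * y = 0 := by rw [← hx'] at hrx; linarith
        rcases mul_eq_zero.1 h0 with h | h
        · exact h
        · exact absurd h.symm (ne_of_lt hy')
      refine ⟨(Equiv.swap 0 1 : Equiv.Perm (Fin 2)).toPEquiv.toMatrix, ⟨Equiv.swap 0 1, rfl⟩, ?_, ?_⟩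
      · refine conj_perm_triangular (Equiv.swap 0 1) A ?_
        rw [Equiv.swap_inv, Equiv.swap_apply_left, Equiv.swap_apply_right]
        exact hb
      · refine conj_perm_triangular (Equiv.swap 0 1) B ?_
        rw [Equiv.swap_inv, Equiv.swap_apply_left, Equiv.swap_apply_right]
        exact hq
    · -- x = 0 and y = 0 : AB = BA
      left
      ext i j
      rw [Matrix.mul_apply, Matrix.mul_apply, Fin.sum_univ_two, Fin.sum_univ_two]
      fin_cases i <;> fin_cases j <;> simp only [Fin.mk_zero, Fin.mk_one] <;>
        linarith [hbr, hxdef, hydef, hx', hy']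
end

section
/- Suppose that matrices A and B in M_2(ℝ) satisfy AB ≥ BA ≥ 0 (entrywise). Then AB − BA lies in the radical of the algebra generated by A and B; concretely, for every matrix C in the unital subalgebra of M_2(ℝ) generated by A and B, the matrix C(AB − BA) is nilpotent. -/
/-- A 2×2 real matrix that vanishes everywhere except possibly in the (0,1) entry
is nilpotent (it squares to zero). -/
lemma nilp_upper (M : Matrix (Fin 2) (Fin 2) ℝ)
    (h1 : M 0 0 = 0) (h2 : M 1 0 = 0) (h3 : M 1 1 = 0) : IsNilpotent M := by
  refine ⟨2, ?_⟩
  ext i j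
  fin_cases i <;> fin_cases j <;>
    simp [pow_succ, Matrix.mul_apply, Fin.sum_univ_two, h1, h2, h3]

/-- A 2×2 real matrix that vanishes everywhere except possibly in the (1,0) entry
is nilpotent (it squares to zero). -/
lemma nilp_lower (M : Matrix (Fin 2) (Fin 2) ℝ)
    (h1 : M 0 0 = 0) (h2 : M 0 1 = 0) (h3 : M 1 1 = 0) : IsNilpotent M := by
  refine ⟨2, ?_⟩
  ext i j
  fin_cases i <;> fin_cases j <;>
    simp [pow_succ, Matrix.mul_apply, Fin.sum_univ_two, h1, h2, h3]

/-- If `A, B ∈ M₂(ℝ)` satisfy `AB ≥ BA ≥ 0` entrywise, then `AB − BA` lies in the radical of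
the algebra generated by `A` and `B`: for every `C` in the unital subalgebra generated by
`A` and `B`, the matrix `C(AB − BA)` is nilpotent. -/
theorem two_by_two_commutator_in_radical
    (A B : Matrix (Fin 2) (Fin 2) ℝ)
    (hBA : ∀ i j, 0 ≤ (B * A) i j)
    (hAB : ∀ i j, (B * A) i j ≤ (A * B) i j) :
    ∀ C ∈ Algebra.adjoin ℝ ({A, B} : Set (Matrix (Fin 2) (Fin 2) ℝ)),
      IsNilpotent (C * (A * B - B * A)) := by
  -- traces agree, so by entrywise domination the diagonal entries agree
  have htr : (A * B).trace = (B * A).trace := Matrix.trace_mul_comm A B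
  have htr' : (A * B) 0 0 + (A * B) 1 1 = (B * A) 0 0 + (B * A) 1 1 := by
    simpa [Matrix.trace, Matrix.diag, Fin.sum_univ_two] using htr
  have h00 : (A * B) 0 0 = (B * A) 0 0 := by
    have := hAB 0 0; have := hAB 1 1; linarith
  have h11 : (A * B) 1 1 = (B * A) 1 1 := by
    have := hAB 0 0; have := hAB 1 1; linarith
  -- determinants agree
  have hdet' : (A * B) 0 0 * (A * B) 1 1 - (A * B) 0 1 * (A * B) 1 0
      = (B * A) 0 0 * (B * A) 1 1 - (B * A) 0 1 * (B * A) 1 0 := by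
    have hdet : (A * B).det = (B * A).det := by
      rw [Matrix.det_mul, Matrix.det_mul, mul_comm]
    rw [Matrix.det_fin_two, Matrix.det_fin_two] at hdet
    exact hdet
  set p : ℝ := (A * B) 0 1 - (B * A) 0 1 with hp
  set q : ℝ := (A * B) 1 0 - (B * A) 1 0 with hq
  have hp0 : 0 ≤ p := by have := hAB 0 1; simp [hp]; linarith
  have hq0 : 0 ≤ q := by have := hAB 1 0; simp [hq]; linarith
  have hb0 : 0 ≤ (B * A) 0 1 := hBA 0 1
  have hc0 : 0 ≤ (B * A) 1 0 := hBA 1 0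
  -- key: b*q + c*p + p*q = 0, with all terms nonnegative
  have hsum : (B * A) 0 1 * q + (B * A) 1 0 * p + p * q = 0 := by
    rw [h00, h11] at hdet'
    simp only [hp, hq]
    nlinarith [hdet']
  have hpq : p * q = 0 := by
    nlinarith [mul_nonneg hb0 hq0, mul_nonneg hc0 hp0, mul_nonneg hp0 hq0]
  have hbq : (B * A) 0 1 * q = 0 := by
    nlinarith [mul_nonneg hb0 hq0, mul_nonneg hc0 hp0, mul_nonneg hp0 hq0]
  have hcp : (B * A) 1 0 * p = 0 := by
    nlinarith [mul_nonneg hb0 hq0, mul_nonneg hc0 hp0, mul_nonneg hp0 hq0]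
  -- entrywise formulas for products
  have mulAB : ∀ i j, (A * B) i j = A i 0 * B 0 j + A i 1 * B 1 j := by
    intro i j; simp [Matrix.mul_apply, Fin.sum_univ_two]
  have mulBA : ∀ i j, (B * A) i j = B i 0 * A 0 j + B i 1 * A 1 j := by
    intro i j; simp [Matrix.mul_apply, Fin.sum_univ_two]
  -- the clean form of h00
  have e1 : A 0 1 * B 1 0 = B 0 1 * A 1 0 := by
    have := h00; rw [mulAB, mulBA] at this; linarith
  rcases mul_eq_zero.1 hpq with hpz | hqz
  · -- p = 0 : everything is lower triangular, commutator is q·E₂₁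
    have hpe : (A * B) 0 1 = (B * A) 0 1 := by
      rw [hp] at hpz; linarith
    rcases eq_or_lt_of_le hq0 with hqz | hqpos
    · -- commutator is zero
      have hqe : (A * B) 1 0 = (B * A) 1 0 := by
        rw [hq] at hqz; linarith
      have hABBA : A * B = B * A := by
        apply Matrix.ext
        simp only [Fin.forall_fin_two]
        exact ⟨⟨h00, hpe⟩, hqe, h11⟩
      intro C _
      simp [hABBA]
    · -- q > 0, so (B*A) 0 1 = 0 and (A*B) 0 1 = 0
      have hb : (B * A) 0 1 = 0 := by
        rcases mul_eq_zero.1 hbq with h | h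
        · exact h
        · exfalso; rw [h] at hqpos; exact lt_irrefl 0 hqpos
      have hab01 : (A * B) 0 1 = 0 := by rw [hpe]; exact hb
      have e2 : A 0 0 * B 0 1 + A 0 1 * B 1 1 = 0 := by rw [← mulAB]; exact hab01
      have e3 : B 0 0 * A 0 1 + B 0 1 * A 1 1 = 0 := by rw [← mulBA]; exact hb
      have hqval : q = A 1 0 * B 0 0 + A 1 1 * B 1 0
          - (B 1 0 * A 0 0 + B 1 1 * A 1 0) := by
        rw [hq, mulAB, mulBA]
      have hA01 : A 0 1 = 0 := by
        have key : A 0 1 * q = 0 := by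
          rw [hqval]
          linear_combination (A 1 1 - A 0 0) * e1 - A 1 0 * e2 + A 1 0 * e3
        rcases mul_eq_zero.1 key with h | h
        · exact h
        · exfalso; rw [h] at hqpos; exact lt_irrefl 0 hqpos
      have hB01 : B 0 1 = 0 := by
        have key : B 0 1 * q = 0 := by
          rw [hqval]
          linear_combination (B 1 1 - B 0 0) * e1 - B 1 0 * e2 + B 1 0 * e3
        rcases mul_eq_zero.1 key with h | h
        · exact h
        · exfalso; rw [h] at hqpos; exact lt_irrefl 0 hqpos
      -- everything in the algebra is lower triangular
      intro C hC
      have hC01 : C 0 1 = 0 := by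
        induction hC using Algebra.adjoin_induction with
        | mem x hx =>
          rcases hx with rfl | hx
          · exact hA01
          · rw [Set.mem_singleton_iff] at hx; rw [hx]; exact hB01
        | algebraMap r => simp [Matrix.algebraMap_eq_diagonal]
        | add x y hx hy ihx ihy => simp [ihx, ihy]
        | mul x y hx hy ihx ihy =>
          simp [Matrix.mul_apply, Fin.sum_univ_two, ihx, ihy]
      -- C * (AB - BA) vanishes outside the (1,0) entry
      have hD00 : (A * B - B * A) 0 0 = 0 := by rw [Matrix.sub_apply, h00, sub_self]
      have hD01 : (A * B - B * A) 0 1 = 0 := by rw [Matrix.sub_apply, hpe, sub_self]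
      have hD11 : (A * B - B * A) 1 1 = 0 := by rw [Matrix.sub_apply, h11, sub_self]
      apply nilp_lower
      · rw [Matrix.mul_apply, Fin.sum_univ_two, hD00, hC01]; ring
      · rw [Matrix.mul_apply, Fin.sum_univ_two, hD01, hD11]; ring
      · rw [Matrix.mul_apply, Fin.sum_univ_two, hD01, hD11]; ring
  · -- q = 0 : everything is upper triangular, commutator is p·E₁₂
    have hqe : (A * B) 1 0 = (B * A) 1 0 := by
      rw [hq] at hqz; linarith
    rcases eq_or_lt_of_le hp0 with hpz | hppos
    · have hpe : (A * B) 0 1 = (B * A) 0 1 := by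
        rw [hp] at hpz; linarith
      have hABBA : A * B = B * A := by
        apply Matrix.ext
        simp only [Fin.forall_fin_two]
        exact ⟨⟨h00, hpe⟩, hqe, h11⟩
      intro C _
      simp [hABBA]
    · -- p > 0, so (B*A) 1 0 = 0 and (A*B) 1 0 = 0
      have hc : (B * A) 1 0 = 0 := by
        rcases mul_eq_zero.1 hcp with h | h
        · exact h
        · exfalso; rw [h] at hppos; exact lt_irrefl 0 hppos
      have hab10 : (A * B) 1 0 = 0 := by rw [hqe]; exact hc
      have e2 : A 1 0 * B 0 0 + A 1 1 * B 1 0 = 0 := by rw [← mulAB]; exact hab10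
      have e3 : B 1 0 * A 0 0 + B 1 1 * A 1 0 = 0 := by rw [← mulBA]; exact hc
      have hpval : p = A 0 0 * B 0 1 + A 0 1 * B 1 1
          - (B 0 0 * A 0 1 + B 0 1 * A 1 1) := by
        rw [hp, mulAB, mulBA]
      have hA10 : A 1 0 = 0 := by
        have key : A 1 0 * p = 0 := by
          rw [hpval]
          linear_combination (A 1 1 - A 0 0) * e1 - A 0 1 * e2 + A 0 1 * e3
        rcases mul_eq_zero.1 key with h | h
        · exact h
        · exfalso; rw [h] at hppos; exact lt_irrefl 0 hppos
      have hB10 : B 1 0 = 0 := by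
        have key : B 1 0 * p = 0 := by
          rw [hpval]
          linear_combination (B 1 1 - B 0 0) * e1 - B 0 1 * e2 + B 0 1 * e3
        rcases mul_eq_zero.1 key with h | h
        · exact h
        · exfalso; rw [h] at hppos; exact lt_irrefl 0 hppos
      intro C hC
      have hC10 : C 1 0 = 0 := by
        induction hC using Algebra.adjoin_induction with
        | mem x hx =>
          rcases hx with rfl | hx
          · exact hA10
          · rw [Set.mem_singleton_iff] at hx; rw [hx]; exact hB10
        | algebraMap r => simp [Matrix.algebraMap_eq_diagonal]
        | add x y hx hy ihx ihy => simp [ihx, ihy]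
        | mul x y hx hy ihx ihy =>
          simp [Matrix.mul_apply, Fin.sum_univ_two, ihx, ihy]
      have hD00 : (A * B - B * A) 0 0 = 0 := by rw [Matrix.sub_apply, h00, sub_self]
      have hD10 : (A * B - B * A) 1 0 = 0 := by rw [Matrix.sub_apply, hqe, sub_self]
      have hD11 : (A * B - B * A) 1 1 = 0 := by rw [Matrix.sub_apply, h11, sub_self]
      apply nilp_upper
      · rw [Matrix.mul_apply, Fin.sum_univ_two, hD00, hD10]; ring
      · rw [Matrix.mul_apply, Fin.sum_univ_two, hD00, hD10]; ring
      · rw [Matrix.mul_apply, Fin.sum_univ_two, hD11, hC10]; ring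
end

section
/- Let X be a Banach space and let T be a compact unicellular operator on X. If M is a closed subspace of X invariant under T such that the closure of T(M) is a proper subspace of M, then the closure of T(M) has codimension exactly 1 in M, i.e., the quotient space M / closure(T(M)) is one-dimensional. -/
/-- A closed submodule plus the span of a single vector is closed. -/
private lemma isClosed_sup_span {X : Type*} [NormedAddCommGroup X] [NormedSpace ℝ X]
    (N : Submodule ℝ X) (hN : IsClosed (N : Set X)) (v : X) :
    IsClosed ((N ⊔ Submodule.span ℝ {v} : Submodule ℝ X) : Set X) := by
  haveI : IsClosed (N : Set X) := hN
  have hcont : Continuous N.mkQ := N.isOpenQuotientMap_mkQ.continuous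
  have hspan : IsClosed ((Submodule.span ℝ {N.mkQ v} : Submodule ℝ (X ⧸ N)) : Set (X ⧸ N)) :=
    Submodule.closed_of_finiteDimensional _
  have heq : ((N ⊔ Submodule.span ℝ {v} : Submodule ℝ X) : Set X)
      = N.mkQ ⁻¹' ((Submodule.span ℝ {N.mkQ v} : Submodule ℝ (X ⧸ N)) : Set (X ⧸ N)) := by
    ext x
    simp only [Set.mem_preimage, SetLike.mem_coe]
    constructor
    · intro hx
      rcases Submodule.mem_sup.1 hx with ⟨n, hn, s, hs, rfl⟩
      rcases Submodule.mem_span_singleton.1 hs with ⟨c, rfl⟩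
      refine Submodule.mem_span_singleton.2 ⟨c, ?_⟩
      have hn0 : N.mkQ n = 0 := (Submodule.Quotient.mk_eq_zero N).2 hn
      simp [map_add, map_smul, hn0]
    · intro hx
      rcases Submodule.mem_span_singleton.1 hx with ⟨c, hc⟩
      have hmem : x - c • v ∈ N := by
        have : N.mkQ (x - c • v) = 0 := by
          rw [map_sub, map_smul, ← hc, sub_self]
        rwa [← Submodule.Quotient.mk_eq_zero]
      have : x = (x - c • v) + c • v := by abel
      rw [this]
      exact Submodule.add_mem _ (Submodule.mem_sup_left hmem)
        (Submodule.mem_sup_right (Submodule.smul_mem _ _ (Submodule.mem_span_singleton_self v)))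
  rw [heq]
  exact hspan.preimage hcont

/-- If `T` is a compact unicellular operator on a Banach space `X` and `M` is a closed
`T`-invariant subspace such that the closure of `T(M)` is a proper subspace of `M`, then
the closure of `T(M)` has codimension exactly `1` in `M`. -/
theorem compact_unicellular_codim_one
    {X : Type*} [NormedAddCommGroup X] [NormedSpace ℝ X] [CompleteSpace X]
    (T : X →L[ℝ] X) (hTc : IsCompactOperator T)
    (huni : ∀ M N : Submodule ℝ X, IsClosed (M : Set X) → IsClosed (N : Set X) →
      (∀ x ∈ M, T x ∈ M) → (∀ x ∈ N, T x ∈ N) → M ≤ N ∨ N ≤ M)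
    (M : Submodule ℝ X) (hM : IsClosed (M : Set X)) (hMinv : ∀ x ∈ M, T x ∈ M)
    (hlt : (M.map (T : X →ₗ[ℝ] X)).topologicalClosure < M) :
    Module.finrank ℝ (M ⧸ ((M.map (T : X →ₗ[ℝ] X)).topologicalClosure.comap M.subtype)) = 1 := by
  classical
  set N := (M.map (T : X →ₗ[ℝ] X)).topologicalClosure with hNdef
  have hmaple : M.map (T : X →ₗ[ℝ] X) ≤ M := by rintro _ ⟨z, hz, rfl⟩; exact hMinv z hz
  have hNclosed : IsClosed (N : Set X) := Submodule.isClosed_topologicalClosure _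
  have hTN : ∀ x ∈ M, T x ∈ N := fun x hx =>
    Submodule.le_topologicalClosure _ ⟨x, hx, rfl⟩
  have hNinv : ∀ n ∈ N, T n ∈ N := by
    intro n hn
    have hn' : (n : X) ∈ closure ((M.map (T : X →ₗ[ℝ] X) : Submodule ℝ X) : Set X) := by
      rwa [← Submodule.topologicalClosure_coe]
    have : T n ∈ closure (N : Set X) :=
      map_mem_closure T.continuous hn' fun z hz => hTN z (hmaple hz)
    rwa [hNclosed.closure_eq] at this
  have hPinv : ∀ v ∈ M, ∀ z ∈ N ⊔ Submodule.span ℝ {v}, T z ∈ N ⊔ Submodule.span ℝ {v} := by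
    intro v hv z hz
    rcases Submodule.mem_sup.1 hz with ⟨n, hn, s, hs, rfl⟩
    rcases Submodule.mem_span_singleton.1 hs with ⟨c, rfl⟩
    refine Submodule.mem_sup_left ?_
    rw [map_add, map_smul]
    exact N.add_mem (hNinv n hn) (N.smul_mem c (hTN v hv))
  obtain ⟨x, hxM, hxN⟩ := SetLike.exists_of_lt hlt
  have key : ∀ z ∈ M, ∃ c : ℝ, z - c • x ∈ N := by
    intro z hz
    rcases huni (N ⊔ Submodule.span ℝ {x}) (N ⊔ Submodule.span ℝ {z})
        (isClosed_sup_span N hNclosed x) (isClosed_sup_span N hNclosed z)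
        (hPinv x hxM) (hPinv z hz) with h | h
    · have hx2 : x ∈ N ⊔ Submodule.span ℝ {z} :=
        h (Submodule.mem_sup_right (Submodule.mem_span_singleton_self x))
      rcases Submodule.mem_sup.1 hx2 with ⟨n, hn, s, hs, hxs⟩
      rcases Submodule.mem_span_singleton.1 hs with ⟨c, rfl⟩
      have hc : c ≠ 0 := by
        rintro rfl
        apply hxN
        rw [zero_smul, add_zero] at hxs
        exact hxs ▸ hn
      refine ⟨c⁻¹, ?_⟩
      have heq2 : z - c⁻¹ • x = -(c⁻¹ • n) := by
        rw [← hxs, smul_add, smul_smul, inv_mul_cancel₀ hc, one_smul]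
        abel
      rw [heq2]
      exact N.neg_mem (N.smul_mem _ hn)
    · have hz2 : z ∈ N ⊔ Submodule.span ℝ {x} :=
        h (Submodule.mem_sup_right (Submodule.mem_span_singleton_self z))
      rcases Submodule.mem_sup.1 hz2 with ⟨n, hn, s, hs, hzs⟩
      rcases Submodule.mem_span_singleton.1 hs with ⟨c, rfl⟩
      refine ⟨c, ?_⟩
      have : z - c • x = n := by rw [← hzs]; abel
      rw [this]; exact hn
  refine finrank_eq_one (Submodule.Quotient.mk (⟨x, hxM⟩ : M)) ?_ ?_
  · rw [Ne, Submodule.Quotient.mk_eq_zero]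
    intro h
    exact hxN (Submodule.mem_comap.1 h)
  · intro w
    obtain ⟨z, rfl⟩ := Submodule.Quotient.mk_surjective _ w
    obtain ⟨c, hc⟩ := key (z : X) z.2
    refine ⟨c, ?_⟩
    rw [← Submodule.Quotient.mk_smul, Submodule.Quotient.eq]
    refine Submodule.mem_comap.2 ?_
    have : (M.subtype) (c • (⟨x, hxM⟩ : M) - z) = -((z : X) - c • x) := by
      simp [Submodule.coe_subtype]
    rw [this]
    exact N.neg_mem hc
end

section
/- Let S be a Donoghue operator on ℓ², i.e., S e₀ = 0 and S eₙ = wₙ eₙ₋₁ for n ≥ 1, where (eₙ)_{n≥0} is the standard orthonormal basis of ℓ² and (wₙ)_{n≥1} is a sequence of positive real numbers that is monotone decreasing and square-summable. If a positive bounded operator T on ℓ² semi-commutes with S (i.e., TS ≥ ST or ST ≥ TS), then S and T are simultaneously ideal-triangularizable; in particular, for every n ≥ 0 the subspace M_n spanned by e₀, …, eₙ is invariant under T. -/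
namespace DonoghueAux
open scoped ENNReal



noncomputable def coordCLM (j : ℕ) : lp (fun _ : ℕ => ℝ) 2 →L[ℝ] ℝ :=
  LinearMap.mkContinuous
    { toFun := fun x => x j
      map_add' := fun x y => rfl
      map_smul' := fun c x => rfl }
    1 (fun x => by
      rw [one_mul]; exact lp.norm_apply_le_norm (by norm_num : (2:ℝ≥0∞) ≠ 0) x j)

@[simp] lemma coordCLM_apply (j : ℕ) (x : lp (fun _ : ℕ => ℝ) 2) : coordCLM j x = x j := rfl

noncomputable def e (n : ℕ) : lp (fun _ : ℕ => ℝ) 2 := lp.single 2 n 1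

lemma e_apply (n k : ℕ) : e n k = if k = n then 1 else 0 := by
  by_cases h : k = n
  · simp [e, h, lp.single_apply_self]
  · simp [e, h, lp.single_apply_ne 2 n _ h]

lemma single_eq_smul_e (n : ℕ) (c : ℝ) : lp.single 2 n c = c • e n := by
  rw [e, ← lp.single_smul, smul_eq_mul, mul_one]

lemma hasSum_e (x : lp (fun _ : ℕ => ℝ) 2) :
    HasSum (fun n => x n • e n) x := by
  have h := lp.hasSum_single (E := fun _ : ℕ => ℝ) (p := 2) (by norm_num) x
  refine h.congr_fun fun n => ?_
  rw [single_eq_smul_e]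

lemma S_apply (w : ℕ → ℝ)
    (S : lp (fun _ : ℕ => ℝ) 2 →L[ℝ] lp (fun _ : ℕ => ℝ) 2)
    (hS0 : S (lp.single 2 0 (1 : ℝ)) = 0)
    (hSn : ∀ n : ℕ, S (lp.single 2 (n + 1) (1 : ℝ)) = w (n + 1) • lp.single 2 n (1 : ℝ))
    (y : lp (fun _ : ℕ => ℝ) 2) (j : ℕ) :
    S y j = w (j + 1) * y (j + 1) := by
  have h1 : HasSum (fun n => y n • S (e n)) (S y) := (hasSum_e y).mapL S |>.congr_fun (by simp)
  have h2 : HasSum (fun n => (y n • S (e n)) j) (S y j) :=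
    (h1.mapL (coordCLM j)).congr_fun (by simp)
  have h3 : ∀ n : ℕ, n ≠ j + 1 → (y n • S (e n)) j = 0 := by
    intro n hn
    match n, hn with
    | 0, _ =>
      have hs : S (e 0) = 0 := hS0
      simp [hs, lp.coeFn_smul]
    | (m+1), hn =>
      have hj : j ≠ m := fun h => hn (by omega)
      have hs : S (e (m+1)) = w (m+1) • e m := hSn m
      simp [hs, lp.coeFn_smul, e_apply, hj]
  have h4 : (fun n => (y n • S (e n)) j) (j+1) = w (j+1) * y (j+1) := by
    have hs : S (e (j+1)) = w (j+1) • e j := hSn j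
    simp [hs, lp.coeFn_smul, e_apply, mul_comm]
  have h5 := hasSum_single (f := fun n => (y n • S (e n)) j) (j+1) h3
  beta_reduce at h4
  rw [h4] at h5
  exact h2.unique h5


lemma e_nonneg (n k : ℕ) : 0 ≤ e n k := by
  rw [e_apply]; split <;> norm_num

lemma norm_e (n : ℕ) : ‖e n‖ = 1 := by
  simpa [e] using lp.norm_single (E := fun _ : ℕ => ℝ) (p := 2) (by norm_num) n (1:ℝ)
noncomputable def Jspan (n : ℕ) : Submodule ℝ (lp (fun _ : ℕ => ℝ) 2) :=
  Submodule.span ℝ (e '' {k : ℕ | k < n})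

lemma repr_of_vanish {n : ℕ} {x : lp (fun _ : ℕ => ℝ) 2} (h : ∀ k, n ≤ k → x k = 0) :
    x = ∑ k ∈ Finset.range n, x k • e k := by
  apply lp.ext
  funext j
  have : (∑ k ∈ Finset.range n, x k • e k) j = ∑ k ∈ Finset.range n, x k * e k j := by
    rw [← coordCLM_apply, map_sum]
    simp [smul_eq_mul]
  rw [this]
  by_cases hj : j < n
  · rw [Finset.sum_eq_single j (fun b _ hb => by simp [e_apply, Ne.symm hb]) (by simp [hj])]
    simp [e_apply]
  · rw [Finset.sum_eq_zero (fun b hb => by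
      simp only [Finset.mem_range] at hb
      rw [e_apply, if_neg (by omega : ¬ j = b), mul_zero])]
    exact h j (by omega)

lemma mem_Jspan {n : ℕ} {x : lp (fun _ : ℕ => ℝ) 2} :
    x ∈ Jspan n ↔ ∀ k, n ≤ k → x k = 0 := by
  constructor
  · intro hx
    refine Submodule.span_induction (p := fun y _ => ∀ k, n ≤ k → y k = 0) ?_ ?_ ?_ ?_ hx
    · rintro y ⟨m, hm, rfl⟩ k hk
      simp only [Set.mem_setOf_eq] at hm
      rw [e_apply, if_neg (by omega : ¬ k = m)]
    · intro k _; simp [lp.coeFn_zero]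
    · intro a b _ _ ha hb k hk
      have : (a + b) k = a k + b k := rfl
      rw [this, ha k hk, hb k hk, add_zero]
    · intro c a _ ha k hk
      have : (c • a) k = c * a k := rfl
      rw [this, ha k hk, mul_zero]
  · intro h
    rw [repr_of_vanish h]
    refine Submodule.sum_mem _ fun k hk => Submodule.smul_mem _ _ ?_
    exact Submodule.subset_span ⟨k, by simpa using Finset.mem_range.mp hk, rfl⟩

lemma Jspan_closed (n : ℕ) : IsClosed ((Jspan n : Submodule ℝ (lp (fun _ : ℕ => ℝ) 2)) : Set (lp (fun _ : ℕ => ℝ) 2)) := by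
  have : FiniteDimensional ℝ (Jspan n) :=
    FiniteDimensional.span_of_finite ℝ ((Set.finite_Iio n).image e |>.subset (by simp [Set.Iio]))
  exact Submodule.closed_of_finiteDimensional _

lemma Jspan_mono : Monotone Jspan := by
  intro a b hab
  rw [SetLike.le_def]
  intro x hx
  rw [mem_Jspan] at hx ⊢
  exact fun k hk => hx k (le_trans hab hk)

lemma dense_total (M : Submodule ℝ (lp (fun _ : ℕ => ℝ) 2))
    (hcl : IsClosed (M : Set (lp (fun _ : ℕ => ℝ) 2))) (he : ∀ k, e k ∈ M) : M = ⊤ := by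
  rw [Submodule.eq_top_iff']
  intro x
  have h := lp.hasSum_single (E := fun _ : ℕ => ℝ) (p := 2) (by norm_num) x
  have := h.tendsto_sum_nat
  refine hcl.mem_of_tendsto this (Filter.Eventually.of_forall fun s => ?_)
  refine Submodule.sum_mem _ fun k _ => ?_
  have : lp.single 2 k (x k) = x k • e k := by rw [e, ← lp.single_smul, smul_eq_mul, mul_one]
  rw [this]
  exact Submodule.smul_mem _ _ (he k)




-- w monotone in general
lemma wmono' (w : ℕ → ℝ) (hmono : ∀ n : ℕ, w (n + 2) ≤ w (n + 1)) :
    ∀ n m : ℕ, n ≤ m → w (m + 1) ≤ w (n + 1) := by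
  intro n m hnm
  induction m with
  | zero => interval_cases n; rfl
  | succ m ih =>
    rcases Nat.lt_or_ge n (m+1) with h | h
    · exact le_trans (hmono m) (ih (by omega))
    · have : n = m + 1 := by omega
      subst this; rfl

lemma wtend (w : ℕ → ℝ) (hw : ∀ n : ℕ, 0 < w (n + 1))
    (hsum : Summable fun n : ℕ => w (n + 1) ^ 2) :
    ∀ ε : ℝ, 0 < ε → ∃ N, ∀ n, N ≤ n → w (n + 1) < ε := by
  intro ε hε
  have h0 := hsum.tendsto_atTop_zero
  rw [Metric.tendsto_atTop] at h0
  obtain ⟨N, hN⟩ := h0 (ε ^ 2) (by positivity)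
  refine ⟨N, fun n hn => ?_⟩
  have h1 := hN n hn
  rw [Real.dist_eq, sub_zero, abs_of_nonneg (by positivity)] at h1
  exact lt_of_pow_lt_pow_left₀ 2 (le_of_lt hε) h1

section Tri
variable (w : ℕ → ℝ) (S T : lp (fun _ : ℕ => ℝ) 2 →L[ℝ] lp (fun _ : ℕ => ℝ) 2)

lemma T_tri (hw : ∀ n : ℕ, 0 < w (n + 1))
    (hmono : ∀ n : ℕ, w (n + 2) ≤ w (n + 1))
    (hsum : Summable fun n : ℕ => w (n + 1) ^ 2)
    (hS0 : S (lp.single 2 0 (1 : ℝ)) = 0)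
    (hSn : ∀ n : ℕ, S (lp.single 2 (n + 1) (1 : ℝ)) = w (n + 1) • lp.single 2 n (1 : ℝ))
    (hT : ∀ x : lp (fun _ : ℕ => ℝ) 2, (∀ k, 0 ≤ x k) → ∀ k, 0 ≤ (T x) k)
    (hsemi : (∀ x : lp (fun _ : ℕ => ℝ) 2, (∀ k, 0 ≤ x k) →
                ∀ k, ((S * T) x) k ≤ ((T * S) x) k) ∨
             (∀ x : lp (fun _ : ℕ => ℝ) 2, (∀ k, 0 ≤ x k) →
                ∀ k, ((T * S) x) k ≤ ((S * T) x) k)) :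
    ∀ j k : ℕ, k < j → T (e k) j = 0 := by
  set t : ℕ → ℕ → ℝ := fun j k => T (e k) j with ht
  have hw' : ∀ a b : ℕ, 0 < w (a + 1 + b) := fun a b => by
    rw [show a + 1 + b = (a + b) + 1 by omega]; exact hw (a + b)
  have tpos : ∀ j k, 0 ≤ t j k := fun j k => hT (e k) (e_nonneg k) j
  have tbd : ∀ j k, t j k ≤ ‖T‖ := by
    intro j k
    calc t j k ≤ |t j k| := le_abs_self _
    _ = ‖(T (e k)) j‖ := rfl
    _ ≤ ‖T (e k)‖ := lp.norm_apply_le_norm (by norm_num : (2:ℝ≥0∞) ≠ 0) _ j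
    _ ≤ ‖T‖ * ‖e k‖ := T.le_opNorm _
    _ = ‖T‖ := by rw [norm_e, mul_one]
  have hST : ∀ k j, ((S * T) (e k)) j = w (j + 1) * t (j + 1) k := by
    intro k j
    rw [ContinuousLinearMap.mul_apply]
    exact S_apply w S hS0 hSn (T (e k)) j
  have hTS0 : ∀ j, ((T * S) (e 0)) j = 0 := by
    intro j
    rw [ContinuousLinearMap.mul_apply, show S (e 0) = 0 from hS0]
    simp [lp.coeFn_zero]
  have hTSn : ∀ k j, ((T * S) (e (k + 1))) j = w (k + 1) * t j k := by
    intro k j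
    rw [ContinuousLinearMap.mul_apply, show S (e (k+1)) = w (k+1) • e k from hSn k, map_smul]
    simp [lp.coeFn_smul, ht]
  rcases hsemi with hsemi | hsemi
  · -- case ST ≤ TS
    have key : ∀ k j, w (j + 1) * t (j + 1) k ≤ ((T * S) (e k)) j := by
      intro k j
      have := hsemi (e k) (e_nonneg k) j
      rwa [hST] at this
    intro j k
    induction k generalizing j with
    | zero =>
      intro hj
      obtain ⟨j', rfl⟩ : ∃ j', j = j' + 1 := ⟨j - 1, by omega⟩
      have h1 := key 0 j'
      rw [hTS0] at h1
      have h2 := mul_nonneg (le_of_lt (hw j')) (tpos (j' + 1) 0)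
      have h3 : w (j' + 1) * t (j' + 1) 0 = 0 := le_antisymm h1 h2
      have := (hw j').ne'
      exact (mul_eq_zero.mp h3).resolve_left this
    | succ k ih =>
      intro hj
      obtain ⟨j', rfl⟩ : ∃ j', j = j' + 1 := ⟨j - 1, by omega⟩
      have h1 := key (k + 1) j'
      rw [hTSn] at h1
      have hz : t j' k = 0 := ih j' (by omega)
      rw [hz, mul_zero] at h1
      have h2 := mul_nonneg (le_of_lt (hw j')) (tpos (j' + 1) (k + 1))
      have h3 : w (j' + 1) * t (j' + 1) (k + 1) = 0 := le_antisymm h1 h2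
      exact (mul_eq_zero.mp h3).resolve_left (hw j').ne'
  · -- case TS ≤ ST
    have key : ∀ k j, w (k + 1) * t j k ≤ w (j + 1) * t (j + 1) (k + 1) := by
      intro k j
      have := hsemi (e (k + 1)) (e_nonneg (k + 1)) j
      rwa [hST, hTSn] at this
    intro j k hjk
    by_contra hne
    have hc : 0 < t j k := lt_of_le_of_ne (tpos j k) (Ne.symm hne)
    obtain ⟨d', hd⟩ : ∃ d', j = k + (d' + 1) := ⟨j - k - 1, by omega⟩
    set d := d' + 1 with hdd
    -- products
    have step : ∀ m : ℕ,
        (∏ i ∈ Finset.range m, w (k + 1 + i)) * t j k ≤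
        (∏ i ∈ Finset.range m, w (j + 1 + i)) * t (j + m) (k + m) := by
      intro m
      induction m with
      | zero => simp
      | succ m ih =>
        have hA : 0 < ∏ i ∈ Finset.range m, w (k + 1 + i) :=
          Finset.prod_pos fun i _ => hw' k i
        have hB : 0 < ∏ i ∈ Finset.range m, w (j + 1 + i) :=
          Finset.prod_pos fun i _ => hw' j i
        have hkey := key (k + m) (j + m)
        calc (∏ i ∈ Finset.range (m+1), w (k + 1 + i)) * t j k
            = w (k + 1 + m) * ((∏ i ∈ Finset.range m, w (k + 1 + i)) * t j k) := by
              rw [Finset.prod_range_succ]; ring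
          _ ≤ w (k + 1 + m) * ((∏ i ∈ Finset.range m, w (j + 1 + i)) * t (j + m) (k + m)) :=
              mul_le_mul_of_nonneg_left ih (le_of_lt (hw' k m))
          _ = (∏ i ∈ Finset.range m, w (j + 1 + i)) * (w (k + m + 1) * t (j + m) (k + m)) := by
              rw [show k + 1 + m = k + m + 1 by omega]; ring
          _ ≤ (∏ i ∈ Finset.range m, w (j + 1 + i)) * (w (j + m + 1) * t (j + m + 1) (k + m + 1)) :=
              mul_le_mul_of_nonneg_left hkey (le_of_lt hB)
          _ = (∏ i ∈ Finset.range (m+1), w (j + 1 + i)) * t (j + (m+1)) (k + (m+1)) := by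
              rw [Finset.prod_range_succ, show j + 1 + m = j + m + 1 by omega,
                show j + (m+1) = j + m + 1 by omega, show k + (m+1) = k + m + 1 by omega]
              ring
    -- the contradiction
    set A : ℝ := ∏ i ∈ Finset.range d, w (k + 1 + i) with hA
    have hApos : 0 < A := Finset.prod_pos fun i _ => hw' k i
    have hCpos : 0 < ‖T‖ := lt_of_lt_of_le hc (tbd j k)
    have hwjpos : 0 < w (j + 1) := hw j
    set ε : ℝ := A * t j k / (w (j + 1) ^ d' * ‖T‖) with hε
    have hεpos : 0 < ε := by
      apply div_pos (mul_pos hApos hc)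
      exact mul_pos (pow_pos hwjpos d') hCpos
    obtain ⟨N, hN⟩ := wtend w hw hsum ε hεpos
    set m := max N j - j with hm
    have hjm : N ≤ j + m := by omega
    have hwlt : w (j + m + 1) < ε := by
      have := hN (j + m) hjm
      rwa [show j + m + 1 = (j + m) + 1 by omega] at this
    -- combine
    have h1 := step (d + m)
    have hsplitL : (∏ i ∈ Finset.range (d + m), w (k + 1 + i)) =
        A * ∏ i ∈ Finset.range m, w (j + 1 + i) := by
      rw [Finset.prod_range_add, hA]
      congr 1
      exact Finset.prod_congr rfl fun i _ => by rw [show k + 1 + (d + i) = j + 1 + i by omega]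
    have hsplitR : (∏ i ∈ Finset.range (d + m), w (j + 1 + i)) =
        (∏ i ∈ Finset.range m, w (j + 1 + i)) * ∏ i ∈ Finset.range d, w (j + 1 + m + i) := by
      rw [show d + m = m + d by omega, Finset.prod_range_add]
      congr 1
      exact Finset.prod_congr rfl fun i _ => by rw [show j + 1 + (m + i) = j + 1 + m + i by omega]
    have hB : 0 < ∏ i ∈ Finset.range m, w (j + 1 + i) :=
      Finset.prod_pos fun i _ => hw' j i
    rw [hsplitL, hsplitR] at h1
    have hP : (∏ i ∈ Finset.range d, w (j + 1 + m + i)) ≤ w (j + m + 1) * w (j + 1) ^ d' := by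
      rw [hdd, Finset.prod_range_succ', show j + 1 + m + 0 = j + m + 1 by omega]
      have h2 : (∏ i ∈ Finset.range d', w (j + 1 + m + (i + 1))) ≤ w (j + 1) ^ d' := by
        calc (∏ i ∈ Finset.range d', w (j + 1 + m + (i + 1)))
            ≤ ∏ _i ∈ Finset.range d', w (j + 1) := by
              refine Finset.prod_le_prod (fun i _ => le_of_lt (by rw [show j + 1 + m + (i+1) = (j + m + i + 1) + 1 by omega]; exact hw (j + m + i + 1))) fun i _ => ?_
              rw [show j + 1 + m + (i + 1) = (j + m + i + 1) + 1 by omega]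
              exact wmono' w hmono j (j + m + i + 1) (by omega)
          _ = w (j + 1) ^ d' := by rw [Finset.prod_const, Finset.card_range]
      calc (∏ i ∈ Finset.range d', w (j + 1 + m + (i + 1))) * w (j + m + 1)
          ≤ w (j + 1) ^ d' * w (j + m + 1) :=
            mul_le_mul_of_nonneg_right h2 (le_of_lt (hw (j + m)))
        _ = w (j + m + 1) * w (j + 1) ^ d' := by ring
    -- h1 : A * B * t j k ≤ B * P * t'
    have ht' : t (j + (d + m)) (k + (d + m)) ≤ ‖T‖ := tbd _ _
    have hPpos : 0 < ∏ i ∈ Finset.range d, w (j + 1 + m + i) :=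
      Finset.prod_pos fun i _ => by
        rw [show j + 1 + m + i = (j + m + i) + 1 by omega]; exact hw (j + m + i)
    have h2 : A * t j k ≤ (∏ i ∈ Finset.range d, w (j + 1 + m + i)) * ‖T‖ := by
      have h3 : (∏ i ∈ Finset.range m, w (j + 1 + i)) * (A * t j k) ≤
          (∏ i ∈ Finset.range m, w (j + 1 + i)) *
            ((∏ i ∈ Finset.range d, w (j + 1 + m + i)) * ‖T‖) := by
        calc (∏ i ∈ Finset.range m, w (j + 1 + i)) * (A * t j k)
            = A * (∏ i ∈ Finset.range m, w (j + 1 + i)) * t j k := by ring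
          _ ≤ (∏ i ∈ Finset.range m, w (j + 1 + i)) *
                (∏ i ∈ Finset.range d, w (j + 1 + m + i)) * t (j + (d + m)) (k + (d + m)) := h1
          _ ≤ (∏ i ∈ Finset.range m, w (j + 1 + i)) *
                (∏ i ∈ Finset.range d, w (j + 1 + m + i)) * ‖T‖ := by
              apply mul_le_mul_of_nonneg_left ht'
              exact le_of_lt (mul_pos hB hPpos)
          _ = (∏ i ∈ Finset.range m, w (j + 1 + i)) *
                ((∏ i ∈ Finset.range d, w (j + 1 + m + i)) * ‖T‖) := by ring
      exact le_of_mul_le_mul_left h3 hB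
    have h4 : A * t j k ≤ w (j + m + 1) * w (j + 1) ^ d' * ‖T‖ :=
      le_trans h2 (mul_le_mul_of_nonneg_right hP (le_of_lt hCpos))
    have h5 : ε ≤ w (j + m + 1) := by
      rw [hε, div_le_iff₀ (mul_pos (pow_pos hwjpos d') hCpos)]
      calc A * t j k ≤ w (j + m + 1) * w (j + 1) ^ d' * ‖T‖ := h4
        _ = w (j + m + 1) * (w (j + 1) ^ d' * ‖T‖) := by ring
    exact absurd hwlt (not_lt.mpr h5)
end Tri


end DonoghueAux

open DonoghueAux in
/-- If a positive bounded operator `T` on `ℓ²` semi-commutes with a Donoghue operator `S`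
(given by `S e₀ = 0`, `S eₙ = wₙ eₙ₋₁` for positive, decreasing, square-summable weights),
then `S` and `T` are simultaneously ideal-triangularizable; in particular every subspace
`Mₙ = span{e₀, …, eₙ}` is invariant under `T`. -/
theorem donoghue_semicommuting_ideal_triangularizable
    (w : ℕ → ℝ) (hw : ∀ n : ℕ, 0 < w (n + 1))
    (hmono : ∀ n : ℕ, w (n + 2) ≤ w (n + 1))
    (hsum : Summable fun n : ℕ => w (n + 1) ^ 2)
    (S T : lp (fun _ : ℕ => ℝ) 2 →L[ℝ] lp (fun _ : ℕ => ℝ) 2)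
    (hS0 : S (lp.single 2 0 (1 : ℝ)) = 0)
    (hSn : ∀ n : ℕ, S (lp.single 2 (n + 1) (1 : ℝ)) = w (n + 1) • lp.single 2 n (1 : ℝ))
    (hT : ∀ x : lp (fun _ : ℕ => ℝ) 2, (∀ k, 0 ≤ x k) → ∀ k, 0 ≤ (T x) k)
    (hsemi : (∀ x : lp (fun _ : ℕ => ℝ) 2, (∀ k, 0 ≤ x k) →
                ∀ k, ((S * T) x) k ≤ ((T * S) x) k) ∨
             (∀ x : lp (fun _ : ℕ => ℝ) 2, (∀ k, 0 ≤ x k) →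
                ∀ k, ((T * S) x) k ≤ ((S * T) x) k)) :
    (∃ 𝒞 : Set (Submodule ℝ (lp (fun _ : ℕ => ℝ) 2)),
      (∀ M ∈ 𝒞, IsClosed (M : Set (lp (fun _ : ℕ => ℝ) 2)) ∧
        ∀ x y : lp (fun _ : ℕ => ℝ) 2, (∀ k, |x k| ≤ |y k|) → y ∈ M → x ∈ M) ∧
      IsChain (· ≤ ·) 𝒞 ∧
      (∀ 𝒞' : Set (Submodule ℝ (lp (fun _ : ℕ => ℝ) 2)), 𝒞 ⊆ 𝒞' → IsChain (· ≤ ·) 𝒞' →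
        (∀ M ∈ 𝒞', IsClosed (M : Set (lp (fun _ : ℕ => ℝ) 2)) ∧
          ∀ x y : lp (fun _ : ℕ => ℝ) 2, (∀ k, |x k| ≤ |y k|) → y ∈ M → x ∈ M) → 𝒞' = 𝒞) ∧
      (∀ M ∈ 𝒞, (∀ x ∈ M, S x ∈ M) ∧ (∀ x ∈ M, T x ∈ M))) ∧
    (∀ n : ℕ, ∀ x ∈ Submodule.span ℝ
        ((fun k : ℕ => lp.single 2 k (1 : ℝ)) '' {k : ℕ | k ≤ n}),
      T x ∈ Submodule.span ℝ ((fun k : ℕ => lp.single 2 k (1 : ℝ)) '' {k : ℕ | k ≤ n})) := by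
  classical
  have tri : ∀ j k : ℕ, k < j → T (e k) j = 0 :=
    T_tri w S T hw hmono hsum hS0 hSn hT hsemi
  -- invariance of Jspan under T
  have hTJ : ∀ n, ∀ x ∈ Jspan n, T x ∈ Jspan n := by
    intro n x hx
    rw [mem_Jspan] at hx ⊢
    intro j hj
    have hrepr : T x = ∑ k ∈ Finset.range n, x k • T (e k) := by
      conv_lhs => rw [repr_of_vanish hx]
      rw [map_sum]
      exact Finset.sum_congr rfl fun k _ => by rw [map_smul]
    rw [hrepr, ← coordCLM_apply, map_sum]
    refine Finset.sum_eq_zero fun k hk => ?_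
    rw [map_smul, coordCLM_apply, smul_eq_mul,
      tri j k (lt_of_lt_of_le (Finset.mem_range.mp hk) hj), mul_zero]
  have hSJ : ∀ n, ∀ x ∈ Jspan n, S x ∈ Jspan n := by
    intro n x hx
    rw [mem_Jspan] at hx ⊢
    intro j hj
    rw [S_apply w S hS0 hSn x j, hx (j + 1) (by omega), mul_zero]
  have heJ : ∀ k, e k ∈ Jspan (k + 1) := by
    intro k
    rw [mem_Jspan]
    intro j hj
    rw [e_apply, if_neg (by omega)]
  have hJ0 : Jspan 0 = ⊥ := by
    rw [Jspan, show {k : ℕ | k < 0} = (∅ : Set ℕ) by ext k; simp]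
    simp [Submodule.span_empty]
  refine ⟨⟨insert ⊤ (Set.range Jspan), ?_, ?_, ?_, ?_⟩, ?_⟩
  · -- closed ideals
    rintro M (rfl | ⟨n, rfl⟩)
    · refine ⟨by simp, fun x y _ _ => Submodule.mem_top⟩
    · refine ⟨Jspan_closed n, fun x y hxy hy => ?_⟩
      rw [mem_Jspan] at hy ⊢
      intro k hk
      have := hxy k
      rw [hy k hk, abs_zero] at this
      exact abs_eq_zero.mp (le_antisymm this (abs_nonneg _))
  · -- chain
    rintro M (rfl | ⟨a, rfl⟩) N (rfl | ⟨b, rfl⟩) hne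
    · exact absurd rfl hne
    · exact Or.inr le_top
    · exact Or.inl le_top
    · rcases le_total a b with h | h
      · exact Or.inl (Jspan_mono h)
      · exact Or.inr (Jspan_mono h)
  · -- maximality
    intro 𝒞' hsub hchain' hprop
    refine Set.Subset.antisymm (fun M hM => ?_) hsub
    by_cases htop : M = ⊤
    · exact htop ▸ Set.mem_insert _ _
    obtain ⟨hMcl, hMid⟩ := hprop M hM
    by_cases hex : ∃ n, M ≤ Jspan n
    · have hJmem : ∀ n, Jspan n ∈ 𝒞' := fun n => hsub (Set.mem_insert_of_mem _ ⟨n, rfl⟩)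
      obtain ⟨n₀, hle, hmin⟩ : ∃ n₀, M ≤ Jspan n₀ ∧ ∀ m, m < n₀ → ¬ M ≤ Jspan m :=
        ⟨Nat.find hex, Nat.find_spec hex, fun m hm => Nat.find_min hex hm⟩
      cases n₀ with
      | zero =>
        have : M = Jspan 0 := by
          rw [hJ0]
          exact le_bot_iff.mp (hJ0 ▸ hle)
        exact this ▸ Set.mem_insert_of_mem _ ⟨0, rfl⟩
      | succ m =>
        have hle' : M ≤ Jspan (m + 1) := hle
        have hnot : ¬ M ≤ Jspan m := hmin m (by omega)
        have hge : Jspan m ≤ M := by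
          rcases eq_or_ne M (Jspan m) with rfl | hne
          · exact absurd le_rfl hnot
          rcases hchain' (hJmem m) hM hne.symm with h | h
          · exact h
          · exact absurd h hnot
        obtain ⟨x, hxM, hxn⟩ := SetLike.not_le_iff_exists.mp hnot
        have hxm : x m ≠ 0 := by
          intro h0
          apply hxn
          rw [mem_Jspan]
          intro k hk
          rcases eq_or_lt_of_le hk with rfl | hk'
          · exact h0
          · exact mem_Jspan.mp (hle' hxM) k (by omega)
        have heM : e m ∈ M := by
          have h1 : ((x m)⁻¹ • x) ∈ M := Submodule.smul_mem _ _ hxM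
          refine hMid (e m) ((x m)⁻¹ • x) (fun k => ?_) h1
          have hco : ((x m)⁻¹ • x) k = (x m)⁻¹ * x k := rfl
          rw [hco, e_apply]
          by_cases hk : k = m
          · subst hk
            rw [if_pos rfl, abs_mul, abs_inv, inv_mul_cancel₀ (abs_ne_zero.mpr hxm), abs_one]
          · rw [if_neg hk, abs_zero]
            exact abs_nonneg _
        have hfin : M = Jspan (m + 1) := by
          refine le_antisymm hle' fun y hy => ?_
          have h1 : y - y m • e m ∈ Jspan m := by
            rw [mem_Jspan]
            intro k hk
            have hco : (y - y m • e m) k = y k - y m * e m k := rfl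
            rw [hco, e_apply]
            by_cases hkm : k = m
            · subst hkm; rw [if_pos rfl, mul_one, sub_self]
            · rw [if_neg hkm, mul_zero, sub_zero]
              exact mem_Jspan.mp hy k (by omega)
          have h2 : y - y m • e m + y m • e m ∈ M :=
            Submodule.add_mem _ (hge h1) (Submodule.smul_mem _ _ heM)
          rwa [sub_add_cancel] at h2
        exact hfin ▸ Set.mem_insert_of_mem _ ⟨m + 1, rfl⟩
    · push_neg at hex
      have hall : ∀ n, Jspan n ≤ M := by
        intro n
        rcases eq_or_ne M (Jspan n) with rfl | hne
        · exact le_rfl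
        rcases hchain' (hsub (Set.mem_insert_of_mem _ ⟨n, rfl⟩)) hM hne.symm with h | h
        · exact h
        · exact absurd h (hex n)
      exact absurd (dense_total M hMcl fun k => hall (k + 1) (heJ k)) htop
  · -- invariance
    rintro M (rfl | ⟨n, rfl⟩)
    · exact ⟨fun x _ => Submodule.mem_top, fun x _ => Submodule.mem_top⟩
    · exact ⟨hSJ n, hTJ n⟩
  · -- the spans
    intro n
    have hset : Submodule.span ℝ ((fun k : ℕ => lp.single 2 k (1 : ℝ)) '' {k : ℕ | k ≤ n}) =
        Jspan (n + 1) := by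
      rw [Jspan]
      congr 1
      ext y
      constructor
      · rintro ⟨k, hk, rfl⟩
        exact ⟨k, by simpa [Nat.lt_succ_iff] using hk, rfl⟩
      · rintro ⟨k, hk, rfl⟩
        exact ⟨k, by simpa [Nat.lt_succ_iff] using hk, rfl⟩
    rw [hset]
    exact hTJ (n + 1)
end

section
/- Let S be a Donoghue operator on ℓ², i.e., S e₀ = 0 and S eₙ = wₙ eₙ₋₁ for n ≥ 1, where (wₙ)_{n≥1} are positive, monotone decreasing and square-summable weights. Then S lies in the radical of the Banach algebra generated by ⟨S] ∪ [S⟩; concretely, for every operator C in the closed unital subalgebra of bounded operators on ℓ² generated by the set {T positive : TS ≥ ST or ST ≥ TS}, the operator CS is quasinilpotent. -/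
open Filter Finset

noncomputable section DonoghueAux

abbrev DonE := lp (fun _ : ℕ => ℝ) 2

def donE (i : ℕ) : DonE := lp.single 2 i 1

/-- coordinate functional -/
def donCoord (k : ℕ) : DonE →L[ℝ] ℝ :=
  LinearMap.mkContinuous
    { toFun := fun x => x k
      map_add' := fun x y => by simp [lp.coeFn_add]
      map_smul' := fun c x => by simp [lp.coeFn_smul] }
    1 (fun x => by
      rw [one_mul]; exact lp.norm_apply_le_norm (by norm_num : (2 : ENNReal) ≠ 0) x k)

@[simp] lemma donCoord_apply (k : ℕ) (x : DonE) : donCoord k x = x k := rfl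

lemma donE_apply (i k : ℕ) : (donE i : DonE) k = if k = i then (1:ℝ) else 0 := by
  simp [donE, lp.single_apply, Pi.single_apply]

lemma donE_nonneg (i k : ℕ) : 0 ≤ (donE i : DonE) k := by
  rw [donE_apply]; split <;> norm_num

lemma donE_norm (i : ℕ) : ‖(donE i : DonE)‖ = 1 := by
  have := lp.norm_single (E := fun _ : ℕ => ℝ) (p := 2) (by norm_num) i (1:ℝ)
  simpa [donE] using this

lemma don_hasSum_coord (T : DonE →L[ℝ] DonE) (x : DonE) (k : ℕ) :
    HasSum (fun i => x i * (T (donE i)) k) ((T x) k) := by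
  have h := lp.hasSum_single (E := fun _ : ℕ => ℝ) (p := 2) (by norm_num) x
  have h2 := h.mapL ((donCoord k).comp T)
  have he : ∀ i : ℕ, ((donCoord k).comp T) (lp.single 2 i (x i)) = x i * (T (donE i)) k := by
    intro i
    have hs : lp.single 2 i (x i) = x i • donE i := by
      rw [donE, ← lp.single_smul]
      norm_num
    rw [ContinuousLinearMap.comp_apply, hs, map_smul]
    simp [smul_eq_mul]
  simpa [he] using h2
/-- Triangularity: all matrix entries strictly below the diagonal vanish. -/
def donTri (T : DonE →L[ℝ] DonE) : Prop := ∀ i k : ℕ, i < k → (T (donE i)) k = 0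

lemma donTri_mul {T U : DonE →L[ℝ] DonE} (hT : donTri T) (hU : donTri U) :
    donTri (T * U) := by
  intro i k hik
  have h := don_hasSum_coord T (U (donE i)) k
  have hz : (fun j => (U (donE i)) j * (T (donE j)) k) = fun _ => (0:ℝ) := by
    funext j
    rcases lt_or_ge j k with hj | hj
    · rw [hT j k hj, mul_zero]
    · rw [hU i j (lt_of_lt_of_le hik hj), zero_mul]
  rw [hz] at h
  have := h.unique hasSum_zero
  simpa [ContinuousLinearMap.mul_apply] using this

lemma donTri_one : donTri (1 : DonE →L[ℝ] DonE) := by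
  intro i k hik
  simp [donE_apply, Nat.ne_of_gt hik]

lemma donTri_zero : donTri (0 : DonE →L[ℝ] DonE) := by
  intro i k _
  simp [lp.coeFn_zero]

lemma donTri_add {T U : DonE →L[ℝ] DonE} (hT : donTri T) (hU : donTri U) :
    donTri (T + U) := by
  intro i k hik
  rw [ContinuousLinearMap.add_apply, lp.coeFn_add, Pi.add_apply, hT i k hik, hU i k hik, add_zero]

lemma donTri_smul (c : ℝ) {T : DonE →L[ℝ] DonE} (hT : donTri T) : donTri (c • T) := by
  intro i k hik
  rw [ContinuousLinearMap.smul_apply, lp.coeFn_smul, Pi.smul_apply, hT i k hik, smul_zero]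

/-- The subalgebra of triangular operators. -/
def donTriAlg : Subalgebra ℝ (DonE →L[ℝ] DonE) where
  carrier := {T | donTri T}
  mul_mem' := fun h1 h2 => donTri_mul h1 h2
  one_mem' := donTri_one
  add_mem' := fun h1 h2 => donTri_add h1 h2
  zero_mem' := donTri_zero
  algebraMap_mem' := fun r => by
    have : algebraMap ℝ (DonE →L[ℝ] DonE) r = r • 1 := Algebra.algebraMap_eq_smul_one r
    rw [Set.mem_setOf_eq, this]
    exact donTri_smul r donTri_one

lemma donTri_isClosed : IsClosed {T : DonE →L[ℝ] DonE | donTri T} := by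
  have : {T : DonE →L[ℝ] DonE | donTri T} =
      ⋂ (i : ℕ) (k : ℕ) (_ : i < k), {T : DonE →L[ℝ] DonE | (T (donE i)) k = 0} := by
    ext T; simp [donTri, Set.mem_iInter]
  rw [this]
  refine isClosed_iInter fun i => isClosed_iInter fun k => isClosed_iInter fun _ => ?_
  have hc : Continuous fun T : DonE →L[ℝ] DonE => (T (donE i)) k := by
    have h1 : Continuous fun T : DonE →L[ℝ] DonE => T (donE i) :=
      (ContinuousLinearMap.apply ℝ DonE (donE i)).continuous
    exact ((donCoord k).continuous).comp h1
  exact isClosed_eq hc continuous_const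
section WithS

variable {w : ℕ → ℝ} {S : DonE →L[ℝ] DonE}

def donP (w : ℕ → ℝ) (a n : ℕ) : ℝ := ∏ s ∈ Finset.range n, w (a + s + 1)

lemma don_aux_zero {a b : ℝ} (ha : 0 < a) (hb : 0 ≤ b) (h : a * b ≤ 0) : b = 0 := by
  rcases eq_or_lt_of_le hb with h' | h'
  · exact h'.symm
  · exact absurd h (not_le.mpr (mul_pos ha h'))

lemma donP_pos {w : ℕ → ℝ} (hw : ∀ n : ℕ, 0 < w (n + 1)) (a n : ℕ) : 0 < donP w a n :=
  Finset.prod_pos (fun s _ => hw (a + s))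

lemma donP_id {w : ℕ → ℝ} (a d : ℕ) :
    w (a + 1) * donP w (a + 1) d = donP w a d * w (a + d + 1) := by
  have h1 : donP w a (d + 1) = w (a + 1) * donP w (a + 1) d := by
    rw [donP, Finset.prod_range_succ', donP, mul_comm]
    congr 1
    apply Finset.prod_congr rfl
    intro s _
    congr 1
    omega
  have h2 : donP w a (d + 1) = donP w a d * w (a + d + 1) := by
    rw [donP, Finset.prod_range_succ, donP]
  rw [← h1, h2]

lemma donScoord (hS0 : S (donE 0) = 0)
    (hSn : ∀ n : ℕ, S (donE (n + 1)) = w (n + 1) • donE n)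
    (x : DonE) (k : ℕ) : (S x) k = w (k + 1) * x (k + 1) := by
  have h := don_hasSum_coord S x k
  have he : (fun i => x i * (S (donE i)) k)
      = fun i => if i = k + 1 then w (k + 1) * x (k + 1) else 0 := by
    funext i
    cases i with
    | zero =>
      rw [hS0]
      simp
    | succ m =>
      rw [hSn m, lp.coeFn_smul, Pi.smul_apply, donE_apply]
      by_cases hm : k = m
      · subst hm
        simp [smul_eq_mul]
        ring
      · have h1 : ¬ (m + 1 = k + 1) := by omega
        simp [hm, h1, smul_eq_mul, Ne.symm hm]
  rw [he] at h
  exact h.unique (hasSum_ite_eq (k + 1) _)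

lemma donGen_tri (hw : ∀ n : ℕ, 0 < w (n + 1))
    (hmono : ∀ n : ℕ, w (n + 2) ≤ w (n + 1))
    (hw0 : Filter.Tendsto (fun n => w (n + 1)) Filter.atTop (nhds 0))
    (hS0 : S (donE 0) = 0)
    (hSn : ∀ n : ℕ, S (donE (n + 1)) = w (n + 1) • donE n)
    (T : DonE →L[ℝ] DonE)
    (hTpos : ∀ x : DonE, (∀ k, 0 ≤ x k) → ∀ k, 0 ≤ (T x) k)
    (hTcase :
      (∀ x : DonE, (∀ k, 0 ≤ x k) → ∀ k, ((S * T) x) k ≤ ((T * S) x) k) ∨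
      (∀ x : DonE, (∀ k, 0 ≤ x k) → ∀ k, ((T * S) x) k ≤ ((S * T) x) k)) :
    donTri T := by
  set t : ℕ → ℕ → ℝ := fun k i => (T (donE i)) k with ht
  have htpos : ∀ k i, 0 ≤ t k i := fun k i => hTpos (donE i) (donE_nonneg i) k
  have htbdd : ∀ k i, t k i ≤ ‖T‖ := by
    intro k i
    calc t k i ≤ |t k i| := le_abs_self _
    _ = ‖(T (donE i)) k‖ := by rw [Real.norm_eq_abs]
    _ ≤ ‖T (donE i)‖ := lp.norm_apply_le_norm (by norm_num) _ k
    _ ≤ ‖T‖ * ‖donE i‖ := T.le_opNorm _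
    _ = ‖T‖ := by rw [donE_norm, mul_one]
  have hST : ∀ i k, ((S * T) (donE i)) k = w (k + 1) * t (k + 1) i := by
    intro i k
    rw [ContinuousLinearMap.mul_apply, donScoord hS0 hSn]
  have hTS0 : ∀ k, ((T * S) (donE 0)) k = 0 := by
    intro k
    rw [ContinuousLinearMap.mul_apply, hS0, map_zero]
    simp
  have hTSn : ∀ i k, ((T * S) (donE (i + 1))) k = w (i + 1) * t k i := by
    intro i k
    rw [ContinuousLinearMap.mul_apply, hSn i, map_smul, lp.coeFn_smul, Pi.smul_apply,
      smul_eq_mul]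
  have hdec : ∀ a b : ℕ, a ≤ b → w (b + 1) ≤ w (a + 1) := by
    have : Antitone (fun n => w (n + 1)) := antitone_nat_of_succ_le (fun n => hmono n)
    exact fun a b hab => this hab
  rcases hTcase with hcase | hcase
  · -- ST ≤ TS : easy induction on columns
    have ha0 : ∀ k, w (k + 1) * t (k + 1) 0 ≤ 0 := by
      intro k
      have := hcase (donE 0) (donE_nonneg 0) k
      rw [hST, hTS0] at this
      exact this
    have haS : ∀ i k, w (k + 1) * t (k + 1) (i + 1) ≤ w (i + 1) * t k i := by
      intro i k
      have := hcase (donE (i + 1)) (donE_nonneg (i + 1)) k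
      rw [hST, hTSn] at this
      exact this
    intro i
    induction i with
    | zero =>
      intro k hk
      obtain ⟨k', rfl⟩ : ∃ k', k = k' + 1 := ⟨k - 1, by omega⟩
      exact don_aux_zero (hw k') (htpos (k' + 1) 0) (ha0 k')
    | succ i ih =>
      intro k hk
      obtain ⟨k', rfl⟩ : ∃ k', k = k' + 1 := ⟨k - 1, by omega⟩
      have hik' : i < k' := by omega
      have h0 := ih k' hik'
      have h1 := haS i k'
      have h0' : t k' i = 0 := h0
      rw [h0', mul_zero] at h1
      exact don_aux_zero (hw k') (htpos (k' + 1) (i + 1)) h1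
  · -- TS ≤ ST : blow-up argument
    have hb : ∀ i k, w (i + 1) * t k i ≤ w (k + 1) * t (k + 1) (i + 1) := by
      intro i k
      have := hcase (donE (i + 1)) (donE_nonneg (i + 1)) k
      rw [hST, hTSn] at this
      exact this
    intro i k hik
    by_contra hne
    have hc : 0 < t k i := lt_of_le_of_ne (htpos k i) (Ne.symm hne)
    have hPpos : ∀ a n, 0 < donP w a n := donP_pos hw
    set P : ℕ → ℕ → ℝ := donP w with hP
    set d : ℕ := k - i with hd
    have hkd : k = i + d := by omega
    have key : ∀ m : ℕ, t k i * P i d ≤ t (k + m) (i + m) * P (i + m) d := by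
      intro m
      induction m with
      | zero => simp
      | succ m ihm =>
        have hstep := hb (i + m) (k + m)
        have hwk : 0 < w (k + m + 1) := hw (k + m)
        have hPp : 0 < P (i + m + 1) d := hPpos _ _
        -- identity: w (i+m+1) * P (i+m+1) d = P (i+m) d * w (k+m+1)
        have hid : w (i + m + 1) * P (i + m + 1) d = P (i + m) d * w (k + m + 1) := by
          have h := donP_id (w := w) (i + m) d
          have he : i + m + d + 1 = k + m + 1 := by omega
          rw [he] at h
          exact h
        refine le_of_mul_le_mul_right ?_ hwk
        calc t k i * P i d * w (k + m + 1)
            ≤ t (k + m) (i + m) * P (i + m) d * w (k + m + 1) := by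
              exact mul_le_mul_of_nonneg_right ihm hwk.le
          _ = (w (i + m + 1) * t (k + m) (i + m)) * P (i + m + 1) d := by
              linear_combination (-(t (k + m) (i + m))) * hid
          _ ≤ (w (k + m + 1) * t (k + m + 1) (i + m + 1)) * P (i + m + 1) d := by
              exact mul_le_mul_of_nonneg_right hstep hPp.le
          _ = t (k + m + 1) (i + m + 1) * P (i + m + 1) d * w (k + m + 1) := by ring
    have hPle : ∀ m, P (i + m) d ≤ w (i + m + 1) ^ d := by
      intro m
      show donP w (i + m) d ≤ _
      rw [donP]
      calc (∏ s ∈ Finset.range d, w (i + m + s + 1))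
          ≤ ∏ s ∈ Finset.range d, w (i + m + 1) := by
            apply Finset.prod_le_prod
            · exact fun s _ => (hw (i + m + s)).le
            · intro s _
              have : w ((i + m + s) + 1) ≤ w ((i + m) + 1) := hdec (i + m) (i + m + s) (by omega)
              exact this
        _ = w (i + m + 1) ^ d := by rw [Finset.prod_const, Finset.card_range]
    -- limit: w (i+m+1)^d → 0
    have hd0 : d ≠ 0 := by omega
    have hlim : Filter.Tendsto (fun m => w (i + m + 1) ^ d) Filter.atTop (nhds 0) := by
      have h1 : Filter.Tendsto (fun m => w (i + m + 1)) Filter.atTop (nhds 0) := by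
        have := hw0.comp (Filter.tendsto_add_atTop_nat i)
        convert this using 2 with m
        simp [Function.comp]
        congr 1
        omega
      have h2 := h1.pow d
      simpa [zero_pow hd0] using h2
    have hT1 : (0:ℝ) < ‖T‖ + 1 := by positivity
    have hε : 0 < t k i * P i d / (‖T‖ + 1) :=
      div_pos (mul_pos hc (hPpos i d)) hT1
    obtain ⟨m, hm⟩ := (hlim.eventually (eventually_lt_nhds hε)).exists
    have hTnn : (0:ℝ) ≤ ‖T‖ := norm_nonneg T
    have hchain : t k i * P i d < t k i * P i d := by
      calc t k i * P i d ≤ t (k + m) (i + m) * P (i + m) d := key m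
        _ ≤ ‖T‖ * (w (i + m + 1) ^ d) := by
            apply mul_le_mul (htbdd _ _) (hPle m) (hPpos _ _).le hTnn
        _ ≤ (‖T‖ + 1) * (w (i + m + 1) ^ d) := by
            have hpw : (0:ℝ) ≤ w (i + m + 1) ^ d := pow_nonneg (hw (i + m)).le d
            nlinarith
        _ < (‖T‖ + 1) * (t k i * P i d / (‖T‖ + 1)) :=
            mul_lt_mul_of_pos_left hm hT1
        _ = t k i * P i d := by
            rw [mul_comm, div_mul_cancel₀ _ (ne_of_gt hT1)]
    exact lt_irrefl _ hchain

end WithS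
lemma don_rpow_eq_sq (a : ℝ) : ‖a‖ ^ (2 : ENNReal).toReal = a ^ 2 := by
  have h2 : ((2 : ENNReal)).toReal = ((2 : ℕ) : ℝ) := by norm_num
  rw [h2, Real.rpow_natCast]
  simpa [Real.norm_eq_abs] using sq_abs a

lemma don_hasSum_sq (z : DonE) : HasSum (fun k => (z k) ^ 2) (‖z‖ ^ 2) := by
  have h := lp.hasSum_norm (E := fun _ : ℕ => ℝ) (p := 2) (by norm_num) z
  have h2 : ((2 : ENNReal)).toReal = ((2 : ℕ) : ℝ) := by norm_num
  have hz : ‖z‖ ^ (2 : ENNReal).toReal = ‖z‖ ^ 2 := by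
    rw [h2, Real.rpow_natCast]
  rw [← hz]
  convert h using 2 with k
  rw [don_rpow_eq_sq]

lemma don_sq_le {u : DonE} {c : ℝ} (hc : 0 ≤ c) (h : ‖u‖ ^ 2 ≤ c ^ 2) : ‖u‖ ≤ c :=
  (pow_le_pow_iff_left₀ (norm_nonneg u) hc two_ne_zero).mp h

def donTail (j : ℕ) (x : DonE) : DonE :=
  ⟨fun k => if j ≤ k then x k else 0, by
    apply memℓp_gen
    have hx := (lp.memℓp x).summable (p := 2) (by norm_num)
    apply Summable.of_nonneg_of_le (fun k => Real.rpow_nonneg (norm_nonneg _) _) _ hx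
    intro k
    apply Real.rpow_le_rpow (norm_nonneg _) _ (by norm_num)
    by_cases h : j ≤ k <;> simp [h]⟩

lemma donTail_apply (j : ℕ) (x : DonE) (k : ℕ) :
    (donTail j x) k = if j ≤ k then x k else 0 := rfl

lemma donTail_zero (x : DonE) : donTail 0 x = x := by
  apply lp.ext
  funext k
  simp [donTail_apply]

lemma donTail_norm_le (j : ℕ) (x : DonE) : ‖donTail j x‖ ≤ ‖x‖ := by
  apply don_sq_le (norm_nonneg x)
  refine hasSum_le ?_ (don_hasSum_sq (donTail j x)) (don_hasSum_sq x)
  intro k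
  rw [donTail_apply]
  by_cases h : j ≤ k
  · simp [h]
  · simp only [h, if_false]
    simpa using sq_nonneg (x k)

lemma donTri_coord_tail {C : DonE →L[ℝ] DonE} (hC : donTri C) (j : ℕ) (x : DonE)
    {k : ℕ} (hk : j ≤ k) : (C x) k = (C (donTail j x)) k := by
  have h1 := don_hasSum_coord C x k
  have h2 := don_hasSum_coord C (donTail j x) k
  have he : (fun i => (donTail j x) i * (C (donE i)) k)
      = fun i => x i * (C (donE i)) k := by
    funext i
    rw [donTail_apply]
    by_cases hij : j ≤ i
    · simp [hij]
    · have hik : i < k := lt_of_lt_of_le (not_le.mp hij) hk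
      rw [hC i k hik]
      simp
  rw [he] at h2
  exact h1.unique h2

lemma donTri_tail_bound {C : DonE →L[ℝ] DonE} (hC : donTri C) (j : ℕ) (x : DonE) :
    ‖donTail j (C x)‖ ≤ ‖C‖ * ‖donTail j x‖ := by
  have step1 : ‖donTail j (C x)‖ ≤ ‖C (donTail j x)‖ := by
    apply don_sq_le (norm_nonneg _)
    refine hasSum_le ?_ (don_hasSum_sq (donTail j (C x))) (don_hasSum_sq (C (donTail j x)))
    intro k
    rw [donTail_apply]
    by_cases h : j ≤ k
    · simp only [h, if_true]
      rw [donTri_coord_tail hC j x h]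
    · simp only [h, if_false]
      simpa using sq_nonneg ((C (donTail j x)) k)
  exact step1.trans (C.le_opNorm _)

section WithS2

variable {w : ℕ → ℝ} {S : DonE →L[ℝ] DonE}

lemma donTail_S (hw : ∀ n : ℕ, 0 < w (n + 1)) (hmono : ∀ n : ℕ, w (n + 2) ≤ w (n + 1))
    (hS0 : S (donE 0) = 0) (hSn : ∀ n : ℕ, S (donE (n + 1)) = w (n + 1) • donE n)
    (j : ℕ) (y : DonE) :
    ‖donTail j (S y)‖ ≤ w (j + 1) * ‖donTail (j + 1) y‖ := by
  have hdec : ∀ a b : ℕ, a ≤ b → w (b + 1) ≤ w (a + 1) := by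
    have : Antitone (fun n => w (n + 1)) := antitone_nat_of_succ_le (fun n => hmono n)
    exact fun a b hab => this hab
  apply don_sq_le (mul_nonneg (hw j).le (norm_nonneg _))
  have hg := don_hasSum_sq (donTail (j + 1) y)
  have hg' : HasSum (fun k => ((donTail (j + 1) y) (k + 1)) ^ 2) (‖donTail (j + 1) y‖ ^ 2) := by
    refine (hasSum_nat_add_iff (f := fun k => ((donTail (j + 1) y) k) ^ 2) 1).mpr ?_
    have hsum0 : ∑ i ∈ Finset.range 1, ((donTail (j + 1) y) i) ^ 2 = 0 := by
      simp [donTail_apply]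
    rw [hsum0, add_zero]
    exact hg
  have hmul := hg'.mul_left ((w (j + 1)) ^ 2)
  have hle : ‖donTail j (S y)‖ ^ 2 ≤ (w (j + 1)) ^ 2 * ‖donTail (j + 1) y‖ ^ 2 := by
    refine hasSum_le ?_ (don_hasSum_sq (donTail j (S y))) hmul
    intro k
    rw [donTail_apply]
    by_cases h : j ≤ k
    · simp only [h, if_true]
      rw [donScoord hS0 hSn]
      have hk1 : j + 1 ≤ k + 1 := by omega
      rw [donTail_apply, if_pos hk1]
      rw [mul_pow]
      apply mul_le_mul_of_nonneg_right _ (sq_nonneg _)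
      apply pow_le_pow_left₀ (hw k).le (hdec j k h)
    · simp only [h, if_false]
      have h1 : (0:ℝ) ≤ (w (j + 1)) ^ 2 := sq_nonneg _
      have h2 : (0:ℝ) ≤ ((donTail (j + 1) y) (k + 1)) ^ 2 := sq_nonneg _
      have : (0:ℝ) ^ 2 = 0 := by norm_num
      rw [this]
      exact mul_nonneg h1 h2
  calc ‖donTail j (S y)‖ ^ 2 ≤ (w (j + 1)) ^ 2 * ‖donTail (j + 1) y‖ ^ 2 := hle
    _ = (w (j + 1) * ‖donTail (j + 1) y‖) ^ 2 := by rw [mul_pow]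

lemma don_key (hw : ∀ n : ℕ, 0 < w (n + 1)) (hmono : ∀ n : ℕ, w (n + 2) ≤ w (n + 1))
    (hS0 : S (donE 0) = 0) (hSn : ∀ n : ℕ, S (donE (n + 1)) = w (n + 1) • donE n)
    {C : DonE →L[ℝ] DonE} (hC : donTri C) :
    ∀ (m j : ℕ) (x : DonE),
      ‖donTail j (((C * S) ^ m) x)‖ ≤ ‖C‖ ^ m * (∏ s ∈ Finset.range m, w (j + s + 1)) * ‖x‖ := by
  intro m
  induction m with
  | zero =>
    intro j x
    rw [pow_zero, ContinuousLinearMap.one_apply, pow_zero, Finset.range_zero,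
      Finset.prod_empty, one_mul, one_mul]
    exact donTail_norm_le j x
  | succ m ih =>
    intro j x
    have hx : ((C * S) ^ (m + 1)) x = C (S (((C * S) ^ m) x)) := by
      rw [pow_succ']
      rfl
    set y := ((C * S) ^ m) x with hy
    calc ‖donTail j (((C * S) ^ (m + 1)) x)‖ = ‖donTail j (C (S y))‖ := by rw [hx]
      _ ≤ ‖C‖ * ‖donTail j (S y)‖ := donTri_tail_bound hC j (S y)
      _ ≤ ‖C‖ * (w (j + 1) * ‖donTail (j + 1) y‖) :=
          mul_le_mul_of_nonneg_left (donTail_S hw hmono hS0 hSn j y) (norm_nonneg C)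
      _ ≤ ‖C‖ * (w (j + 1) * (‖C‖ ^ m * (∏ s ∈ Finset.range m, w (j + 1 + s + 1)) * ‖x‖)) := by
          apply mul_le_mul_of_nonneg_left _ (norm_nonneg C)
          exact mul_le_mul_of_nonneg_left (ih (j + 1) x) (hw j).le
      _ = ‖C‖ ^ (m + 1) * (∏ s ∈ Finset.range (m + 1), w (j + s + 1)) * ‖x‖ := by
          rw [Finset.prod_range_succ']
          have he : (∏ s ∈ Finset.range m, w (j + (s + 1) + 1))
              = ∏ s ∈ Finset.range m, w (j + 1 + s + 1) := by
            apply Finset.prod_congr rfl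
            intro s _
            congr 1
            omega
          rw [he]
          have he2 : j + 0 + 1 = j + 1 := by omega
          rw [he2]
          ring

lemma don_opnorm (hw : ∀ n : ℕ, 0 < w (n + 1)) (hmono : ∀ n : ℕ, w (n + 2) ≤ w (n + 1))
    (hS0 : S (donE 0) = 0) (hSn : ∀ n : ℕ, S (donE (n + 1)) = w (n + 1) • donE n)
    {C : DonE →L[ℝ] DonE} (hC : donTri C) (m : ℕ) :
    ‖(C * S) ^ m‖ ≤ ‖C‖ ^ m * ∏ s ∈ Finset.range m, w (s + 1) := by
  apply ContinuousLinearMap.opNorm_le_bound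
  · apply mul_nonneg (pow_nonneg (norm_nonneg C) m)
    exact Finset.prod_nonneg (fun s _ => (hw s).le)
  · intro x
    have h := don_key hw hmono hS0 hSn hC m 0 x
    rw [donTail_zero] at h
    have he : (∏ s ∈ Finset.range m, w (0 + s + 1)) = ∏ s ∈ Finset.range m, w (s + 1) := by
      apply Finset.prod_congr rfl
      intro s _
      congr 1
      omega
    rw [he] at h
    exact h

end WithS2
lemma don_geo {v : ℕ → ℝ} (hv : ∀ n, 0 < v n) (hv0 : Filter.Tendsto v Filter.atTop (nhds 0)) :
    Filter.Tendsto (fun n : ℕ => (∏ s ∈ Finset.range n, v s) ^ (1 / (n : ℝ)))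
      Filter.atTop (nhds 0) := by
  rw [Metric.tendsto_atTop]
  intro ε hε
  set δ := ε / 2 with hδdef
  have hδ : 0 < δ := by positivity
  obtain ⟨N₁, hN₁⟩ := Filter.eventually_atTop.mp (hv0.eventually_lt_const hδ)
  set Q : ℕ → ℝ := fun n => ∏ s ∈ Finset.range n, v s with hQ
  have hQpos : ∀ n, 0 < Q n := fun n => Finset.prod_pos fun s _ => hv s
  set K : ℝ := Q N₁ / δ ^ N₁ with hK
  have hK0 : 0 < K := div_pos (hQpos N₁) (pow_pos hδ N₁)
  have hKlim : Filter.Tendsto (fun n : ℕ => K ^ (1 / (n : ℝ))) Filter.atTop (nhds 1) := by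
    have h2 : Filter.Tendsto (fun n : ℕ => Real.log K * (1 / (n : ℝ)))
        Filter.atTop (nhds 0) := by
      simpa using tendsto_one_div_atTop_nhds_zero_nat.const_mul (Real.log K)
    have h3 := (Real.continuous_exp.tendsto 0).comp h2
    simp only [Function.comp_def, Real.exp_zero] at h3
    convert h3 using 2 with n
    rw [Real.rpow_def_of_pos hK0]
  obtain ⟨N₂, hN₂⟩ := Filter.eventually_atTop.mp (hKlim.eventually_lt_const one_lt_two)
  refine ⟨max (max N₁ 1) N₂, fun n hn => ?_⟩
  have hn1 : 1 ≤ n := le_trans (le_trans (le_max_right N₁ 1) (le_max_left _ N₂)) hn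
  have hnN₁ : N₁ ≤ n := le_trans (le_trans (le_max_left N₁ 1) (le_max_left _ N₂)) hn
  have hnN₂ : N₂ ≤ n := le_trans (le_max_right _ N₂) hn
  have hncast : ((n : ℝ)) ≠ 0 := Nat.cast_ne_zero.mpr (Nat.one_le_iff_ne_zero.mp hn1)
  have hQle : Q n ≤ K * δ ^ n := by
    have hsplit : Q n = Q N₁ * ∏ s ∈ Finset.range (n - N₁), v (N₁ + s) := by
      have h := Finset.prod_range_add v N₁ (n - N₁)
      have hn' : N₁ + (n - N₁) = n := by omega
      rw [hn'] at h
      exact h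
    have hbound : (∏ s ∈ Finset.range (n - N₁), v (N₁ + s)) ≤ δ ^ (n - N₁) := by
      calc (∏ s ∈ Finset.range (n - N₁), v (N₁ + s))
          ≤ ∏ _s ∈ Finset.range (n - N₁), δ := by
            apply Finset.prod_le_prod (fun s _ => (hv _).le)
            intro s _
            exact (hN₁ (N₁ + s) (by omega)).le
        _ = δ ^ (n - N₁) := by rw [Finset.prod_const, Finset.card_range]
    have hpow : δ ^ n = δ ^ N₁ * δ ^ (n - N₁) := by
      rw [← pow_add]
      congr 1
      omega
    calc Q n = Q N₁ * ∏ s ∈ Finset.range (n - N₁), v (N₁ + s) := hsplit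
      _ ≤ Q N₁ * δ ^ (n - N₁) := by
          exact mul_le_mul_of_nonneg_left hbound (hQpos N₁).le
      _ = K * δ ^ n := by
          rw [hK, hpow]
          field_simp
  have hroot : (Q n) ^ (1 / (n : ℝ)) ≤ (K * δ ^ n) ^ (1 / (n : ℝ)) :=
    Real.rpow_le_rpow (hQpos n).le hQle (by positivity)
  have hsplit2 : (K * δ ^ n) ^ (1 / (n : ℝ)) = K ^ (1 / (n : ℝ)) * δ := by
    rw [Real.mul_rpow hK0.le (pow_nonneg hδ.le n)]
    congr 1
    rw [← Real.rpow_natCast δ n, ← Real.rpow_mul hδ.le]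
    rw [mul_one_div, div_self hncast, Real.rpow_one]
  rw [Real.dist_eq, sub_zero, abs_of_nonneg (Real.rpow_nonneg (hQpos n).le _)]
  calc (Q n) ^ (1 / (n : ℝ)) ≤ K ^ (1 / (n : ℝ)) * δ := by rw [← hsplit2]; exact hroot
    _ < 2 * δ := mul_lt_mul_of_pos_right (hN₂ n hnN₂) hδ
    _ = ε := by rw [hδdef]; ring

end DonoghueAux

/-- A Donoghue operator `S` on `ℓ²` lies in the radical of the Banach algebra generated by
`⟨S] ∪ [S⟩`: for every `C` in the closed unital subalgebra of bounded operators on `ℓ²`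
generated by the positive operators semi-commuting with `S`, the operator `CS` is
quasinilpotent. -/
theorem donoghue_in_radical
    (w : ℕ → ℝ) (hw : ∀ n : ℕ, 0 < w (n + 1))
    (hmono : ∀ n : ℕ, w (n + 2) ≤ w (n + 1))
    (hsum : Summable fun n : ℕ => w (n + 1) ^ 2)
    (S : lp (fun _ : ℕ => ℝ) 2 →L[ℝ] lp (fun _ : ℕ => ℝ) 2)
    (hS0 : S (lp.single 2 0 (1 : ℝ)) = 0)
    (hSn : ∀ n : ℕ, S (lp.single 2 (n + 1) (1 : ℝ)) = w (n + 1) • lp.single 2 n (1 : ℝ)) :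
    ∀ C ∈ (Algebra.adjoin ℝ
        {T : lp (fun _ : ℕ => ℝ) 2 →L[ℝ] lp (fun _ : ℕ => ℝ) 2 |
          (∀ x : lp (fun _ : ℕ => ℝ) 2, (∀ k, 0 ≤ x k) → ∀ k, 0 ≤ (T x) k) ∧
          ((∀ x : lp (fun _ : ℕ => ℝ) 2, (∀ k, 0 ≤ x k) →
              ∀ k, ((S * T) x) k ≤ ((T * S) x) k) ∨
           (∀ x : lp (fun _ : ℕ => ℝ) 2, (∀ k, 0 ≤ x k) →
              ∀ k, ((T * S) x) k ≤ ((S * T) x) k))}).topologicalClosure,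
      Filter.Tendsto (fun n : ℕ => ‖(C * S) ^ n‖ ^ (1 / (n : ℝ)))
        Filter.atTop (nhds 0) := by
  intro C hC
  have hS0' : S (donE 0) = 0 := hS0
  have hSn' : ∀ n : ℕ, S (donE (n + 1)) = w (n + 1) • donE n := hSn
  -- the weights tend to zero
  have hw0 : Filter.Tendsto (fun n : ℕ => w (n + 1)) Filter.atTop (nhds 0) := by
    have h1 := hsum.tendsto_atTop_zero
    have h2 := (Real.continuous_sqrt.tendsto 0).comp h1
    simp only [Function.comp_def, Real.sqrt_zero] at h2
    convert h2 using 2 with n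
    rw [Real.sqrt_sq (hw n).le]
  -- C is triangular
  have hCtri : donTri C := by
    have hsub : {T : lp (fun _ : ℕ => ℝ) 2 →L[ℝ] lp (fun _ : ℕ => ℝ) 2 |
          (∀ x : lp (fun _ : ℕ => ℝ) 2, (∀ k, 0 ≤ x k) → ∀ k, 0 ≤ (T x) k) ∧
          ((∀ x : lp (fun _ : ℕ => ℝ) 2, (∀ k, 0 ≤ x k) →
              ∀ k, ((S * T) x) k ≤ ((T * S) x) k) ∨
           (∀ x : lp (fun _ : ℕ => ℝ) 2, (∀ k, 0 ≤ x k) →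
              ∀ k, ((T * S) x) k ≤ ((S * T) x) k))} ⊆ (donTriAlg : Set (DonE →L[ℝ] DonE)) := by
      rintro T ⟨hTpos, hTcase⟩
      exact donGen_tri hw hmono hw0 hS0' hSn' T hTpos hTcase
    have hle := Algebra.adjoin_le hsub
    have hclosed : closure ((Algebra.adjoin ℝ
        {T : lp (fun _ : ℕ => ℝ) 2 →L[ℝ] lp (fun _ : ℕ => ℝ) 2 |
          (∀ x : lp (fun _ : ℕ => ℝ) 2, (∀ k, 0 ≤ x k) → ∀ k, 0 ≤ (T x) k) ∧
          ((∀ x : lp (fun _ : ℕ => ℝ) 2, (∀ k, 0 ≤ x k) →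
              ∀ k, ((S * T) x) k ≤ ((T * S) x) k) ∨
           (∀ x : lp (fun _ : ℕ => ℝ) 2, (∀ k, 0 ≤ x k) →
              ∀ k, ((T * S) x) k ≤ ((S * T) x) k))}) : Set (DonE →L[ℝ] DonE)) ⊆
        {T : DonE →L[ℝ] DonE | donTri T} :=
      closure_minimal (fun T hT => hle hT) donTri_isClosed
    exact hclosed hC
  -- norm bound and conclusion
  have hb : ∀ n : ℕ, ‖(C * S) ^ n‖ ≤ ‖C‖ ^ n * ∏ s ∈ Finset.range n, w (s + 1) :=
    don_opnorm hw hmono hS0' hSn' hCtri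
  have hPlim : Filter.Tendsto (fun n : ℕ => (∏ s ∈ Finset.range n, w (s + 1)) ^ (1 / (n : ℝ)))
      Filter.atTop (nhds 0) := don_geo (v := fun s => w (s + 1)) (fun n => hw n) hw0
  have hg : Filter.Tendsto
      (fun n : ℕ => (‖C‖ + 1) * (∏ s ∈ Finset.range n, w (s + 1)) ^ (1 / (n : ℝ)))
      Filter.atTop (nhds 0) := by
    have h := hPlim.const_mul (‖C‖ + 1)
    rw [mul_zero] at h
    exact h
  apply squeeze_zero (fun n => Real.rpow_nonneg (norm_nonneg _) _) _ hg
  intro n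
  cases n with
  | zero =>
    simp only [Nat.cast_zero, div_zero, Real.rpow_zero, mul_one]
    linarith [norm_nonneg C]
  | succ m =>
    set n := m + 1
    have hncast : ((n : ℕ) : ℝ) ≠ 0 := Nat.cast_ne_zero.mpr (by omega)
    have hPnn : (0:ℝ) ≤ ∏ s ∈ Finset.range n, w (s + 1) :=
      Finset.prod_nonneg fun s _ => (hw s).le
    have h1 : ‖(C * S) ^ n‖ ≤ (‖C‖ + 1) ^ n * ∏ s ∈ Finset.range n, w (s + 1) := by
      refine (hb n).trans ?_
      apply mul_le_mul_of_nonneg_right _ hPnn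
      exact pow_le_pow_left₀ (norm_nonneg C) (by linarith) n
    have h2 : ‖(C * S) ^ n‖ ^ (1 / (n : ℝ)) ≤
        ((‖C‖ + 1) ^ n * ∏ s ∈ Finset.range n, w (s + 1)) ^ (1 / (n : ℝ)) :=
      Real.rpow_le_rpow (norm_nonneg _) h1 (by positivity)
    have h3 : ((‖C‖ + 1) ^ n * ∏ s ∈ Finset.range n, w (s + 1)) ^ (1 / (n : ℝ))
        = (‖C‖ + 1) * (∏ s ∈ Finset.range n, w (s + 1)) ^ (1 / (n : ℝ)) := by
      rw [Real.mul_rpow (pow_nonneg (by positivity) n) hPnn]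
      congr 1
      rw [← Real.rpow_natCast (‖C‖ + 1) n, ← Real.rpow_mul (by positivity)]
      rw [mul_one_div, div_self hncast, Real.rpow_one]
    rw [h3] at h2
    exact h2
end
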